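/- arXiv:2005.02899 — 5 statements merged into one kernel-verified Lean document; each statement's English description precedes it below -/
import Mathlib

section
/- (FKG inequality, finite case) Let Ω = {0,1}^n with a product of Bernoulli(p) measures, and let f, g : Ω → ℝ be bounded and nondecreasing with respect to the coordinatewise partial order. Then E[f g] ≥ E[f]·E[g]. -/
open MeasureTheory ENNReal

/-- The Bernoulli(`p`) measure on `{0,1}`. -/
noncomputable def bern (p : ℝ≥0∞) : Measure Bool :=
  p • Measure.dirac true + (1 - p) • Measure.dirac false

private lemma fin_cons_le_cons {n : ℕ} {b b' : Bool} {t t' : Fin n → Bool}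
    (hb : b ≤ b') (ht : t ≤ t') :
    (Fin.cons b t : Fin (n+1) → Bool) ≤ (Fin.cons b' t' : Fin (n+1) → Bool) := by
  intro i
  induction i using Fin.cases with
  | zero => simpa using hb
  | succ i => simpa using ht i

private lemma sum_cons (n : ℕ) (F : (Fin (n+1) → Bool) → ℝ) :
    ∑ ω : Fin (n+1) → Bool, F ω
      = ∑ b : Bool, ∑ t : Fin n → Bool, F (Fin.cons b t) := by
  rw [← Equiv.sum_comp (Fin.consEquiv fun _ : Fin (n+1) => Bool) F, Fintype.sum_prod_type]
  rfl

private lemma prod_cons (n : ℕ) (ν : Bool → ℝ) (b : Bool) (t : Fin n → Bool) :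
    (∏ i, ν ((Fin.cons b t : Fin (n+1) → Bool) i)) = ν b * ∏ i, ν (t i) := by
  rw [Fin.prod_univ_succ]; simp

private lemma weight_sum (n : ℕ) (ν : Bool → ℝ) (hsum : ν true + ν false = 1) :
    ∑ ω : Fin n → Bool, ∏ i, ν (ω i) = 1 := by
  induction n with
  | zero => simp
  | succ n ih =>
    rw [sum_cons]
    simp only [prod_cons, ← Finset.mul_sum, ih, mul_one, Fintype.sum_bool, hsum]

private lemma fkg_sum (n : ℕ) (ν : Bool → ℝ) (hν : ∀ b, 0 ≤ ν b)
    (hsum : ν true + ν false = 1)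
    (f g : (Fin n → Bool) → ℝ) (hf : Monotone f) (hg : Monotone g) :
    (∑ ω : Fin n → Bool, (∏ i, ν (ω i)) * f ω) *
      (∑ ω : Fin n → Bool, (∏ i, ν (ω i)) * g ω) ≤
    ∑ ω : Fin n → Bool, (∏ i, ν (ω i)) * (f ω * g ω) := by
  induction n with
  | zero => simp
  | succ n ih =>
    have hw : ∀ t : Fin n → Bool, 0 ≤ ∏ i, ν (t i) :=
      fun t => Finset.prod_nonneg fun i _ => hν _
    have hmono : ∀ b, Monotone (fun t : Fin n → Bool => f (Fin.cons b t)) :=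
      fun b t t' h => hf (fin_cons_le_cons le_rfl h)
    have hmono' : ∀ b, Monotone (fun t : Fin n → Bool => g (Fin.cons b t)) :=
      fun b t t' h => hg (fin_cons_le_cons le_rfl h)
    have hsplit : ∀ h : (Fin (n+1) → Bool) → ℝ,
        (∑ ω : Fin (n+1) → Bool, (∏ i, ν (ω i)) * h ω)
          = ∑ b : Bool, ν b * ∑ t : Fin n → Bool, (∏ i, ν (t i)) * h (Fin.cons b t) := by
      intro h
      rw [sum_cons]
      congr 1; funext b
      rw [Finset.mul_sum]
      congr 1; funext t
      rw [prod_cons]; ring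
    rw [hsplit, hsplit, hsplit, Fintype.sum_bool, Fintype.sum_bool, Fintype.sum_bool]
    set Ft := ∑ t : Fin n → Bool, (∏ i, ν (t i)) * f (Fin.cons true t) with hFt
    set Ff := ∑ t : Fin n → Bool, (∏ i, ν (t i)) * f (Fin.cons false t) with hFf
    set Gt := ∑ t : Fin n → Bool, (∏ i, ν (t i)) * g (Fin.cons true t) with hGt
    set Gf := ∑ t : Fin n → Bool, (∏ i, ν (t i)) * g (Fin.cons false t) with hGf
    have hFle : Ff ≤ Ft := by
      apply Finset.sum_le_sum
      intro t _
      exact mul_le_mul_of_nonneg_left (hf (fin_cons_le_cons (by simp) le_rfl)) (hw t)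
    have hGle : Gf ≤ Gt := by
      apply Finset.sum_le_sum
      intro t _
      exact mul_le_mul_of_nonneg_left (hg (fin_cons_le_cons (by simp) le_rfl)) (hw t)
    have k1 : Ft * Gt ≤ ∑ t : Fin n → Bool, (∏ i, ν (t i)) *
        (f (Fin.cons true t) * g (Fin.cons true t)) := ih _ _ (hmono true) (hmono' true)
    have k2 : Ff * Gf ≤ ∑ t : Fin n → Bool, (∏ i, ν (t i)) *
        (f (Fin.cons false t) * g (Fin.cons false t)) := ih _ _ (hmono false) (hmono' false)
    have h1 := hν true
    have h2 := hν false
    have two : (ν true * Ft + ν false * Ff) * (ν true * Gt + ν false * Gf)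
        ≤ ν true * (Ft * Gt) + ν false * (Ff * Gf) := by
      have hb : ν false = 1 - ν true := by linarith
      have key : ν true * (Ft * Gt) + ν false * (Ff * Gf)
          - (ν true * Ft + ν false * Ff) * (ν true * Gt + ν false * Gf)
          = ν true * ν false * ((Ft - Ff) * (Gt - Gf)) := by
        rw [hb]; ring
      have pos : 0 ≤ ν true * ν false * ((Ft - Ff) * (Gt - Gf)) :=
        mul_nonneg (mul_nonneg h1 h2)
          (mul_nonneg (sub_nonneg.2 hFle) (sub_nonneg.2 hGle))
      linarith
    refine two.trans ?_
    have := mul_le_mul_of_nonneg_left k1 h1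
    have := mul_le_mul_of_nonneg_left k2 h2
    linarith

/-- FKG inequality, finite case: on `{0,1}^n` with the product Bernoulli(`p`)
measure, two bounded nondecreasing functions are positively correlated. -/
theorem fkg_finite (n : ℕ) (p : ℝ≥0∞) (hp : p ≤ 1)
    (f g : (Fin n → Bool) → ℝ) (hf : Monotone f) (hg : Monotone g)
    (hfb : ∃ C, ∀ ω, |f ω| ≤ C) (hgb : ∃ C, ∀ ω, |g ω| ≤ C) :
    (∫ ω, f ω ∂(Measure.pi fun _ : Fin n => bern p)) *
      (∫ ω, g ω ∂(Measure.pi fun _ : Fin n => bern p)) ≤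
    ∫ ω, f ω * g ω ∂(Measure.pi fun _ : Fin n => bern p) := by
  have huniv : bern p Set.univ = 1 := by
    simp [bern, tsub_add_cancel_of_le hp, add_comm]
  haveI : IsProbabilityMeasure (bern p) := ⟨huniv⟩
  set μ := Measure.pi fun _ : Fin n => bern p with hμ
  haveI : IsProbabilityMeasure μ := by rw [hμ]; infer_instance
  set ν : Bool → ℝ := fun b => (bern p {b}).toReal with hν
  have hbern_ne : ∀ b, bern p {b} ≠ ∞ := fun b => measure_ne_top _ _
  have hsingle : ∀ ω : Fin n → Bool, (μ {ω}).toReal = ∏ i, ν (ω i) := by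
    intro ω
    rw [hμ, ← Set.univ_pi_singleton ω, Measure.pi_pi, ENNReal.toReal_prod]
  have hint : ∀ h : (Fin n → Bool) → ℝ,
      ∫ ω, h ω ∂μ = ∑ ω : Fin n → Bool, (∏ i, ν (ω i)) * h ω := by
    intro h
    rw [integral_fintype (Integrable.of_finite)]
    simp only [smul_eq_mul, measureReal_def, hsingle]
  rw [hint, hint, hint]
  apply fkg_sum
  · intro b; exact ENNReal.toReal_nonneg
  · rw [hν]
    simp only
    rw [← ENNReal.toReal_add (hbern_ne _) (hbern_ne _)]
    have : bern p {true} + bern p {false} = 1 := by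
      have h1 : bern p {true} = p := by simp [bern]
      have h2 : bern p {false} = 1 - p := by simp [bern]
      rw [h1, h2, add_tsub_cancel_of_le hp]
    rw [this]; simp
  · exact hf
  · exact hg
end

section
/- (FKG for events) For two increasing events A, B in Bernoulli percolation, P_p[A ∩ B] ≥ P_p[A]·P_p[B]; if A is increasing and B is decreasing, then P_p[A ∩ B] ≤ P_p[A]·P_p[B]. -/
open MeasureTheory

/-- Vertices of the lattice `ℤ^d`. -/
abbrev Vertex (d : ℕ) := Fin d → ℤ

/-- Nearest-neighbour edges of `ℤ^d`: the pair `(v, i)` represents the edge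
`{v, v + e_i}` where `e_i` is the `i`-th unit vector. -/
abbrev Edge (d : ℕ) := (Fin d → ℤ) × Fin d

/-- A percolation configuration: each edge is open (`true`) or closed (`false`). -/
abbrev Config (d : ℕ) := Edge d → Bool

/-- `u` and `v` are joined by an open edge in the configuration `ω`. -/
def openAdj {d : ℕ} (ω : Config d) (u v : Vertex d) : Prop :=
  (∃ i, v = u + Pi.single i 1 ∧ ω (u, i) = true) ∨
  (∃ i, u = v + Pi.single i 1 ∧ ω (v, i) = true)

/-- `x ↔ y`: there is a finite path of open edges joining `x` and `y`. -/
def Conn {d : ℕ} (ω : Config d) (x y : Vertex d) : Prop :=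
  Relation.ReflTransGen (openAdj ω) x y
open ENNReal
/-- `P` is the product over the edges of Bernoulli(`p`) measures: the cylinder
event prescribing the states of finitely many edges has the product probability. -/
def IsBernoulli {d : ℕ} (P : Measure (Config d)) (p : ℝ≥0∞) : Prop :=
  ∀ (S : Finset (Edge d)) (f : Edge d → Bool),
    P {ω | ∀ e ∈ S, ω e = f e} = ∏ e ∈ S, (if f e then p else 1 - p)

/-- Translation of configurations: `(τ_x ω)({v,w}) = ω({v-x, w-x})`. -/
def shiftConfig {d : ℕ} (x : Vertex d) (ω : Config d) : Config d :=
  fun e => ω (e.1 - x, e.2)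

/-- An event is increasing if it is preserved under opening more edges. -/
def IncreasingEvent {d : ℕ} (A : Set (Config d)) : Prop :=
  ∀ ⦃ω ω' : Config d⦄, ω ≤ ω' → ω ∈ A → ω' ∈ A

/-- An event is decreasing if its complement is increasing. -/
def DecreasingEvent {d : ℕ} (A : Set (Config d)) : Prop :=
  IncreasingEvent Aᶜ

set_option linter.unreachableTactic false
set_option linter.unusedTactic false


lemma two_point (a b : ℝ≥0∞) (hab : a + b = 1) (f0 f1 g0 g1 : ℝ≥0∞)
    (hf : f0 ≤ f1) (hg : g0 ≤ g1) :
    (a * f0 + b * f1) * (a * g0 + b * g1) ≤ a * (f0 * g0) + b * (f1 * g1) := by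
  have hb1 : b ≤ 1 := le_of_add_le_right hab.le
  set c := f1 - f0 with hc
  set e := g1 - g0 with he
  have hf1 : f1 = f0 + c := (add_tsub_cancel_of_le hf).symm
  have hg1 : g1 = g0 + e := (add_tsub_cancel_of_le hg).symm
  have h1 : a * (f0 * g0) + b * (f0 * g0) = f0 * g0 := by
    rw [← add_mul, hab, one_mul]
  have hL : a * f0 + b * f1 = f0 + b * c := by
    rw [hf1, mul_add, ← add_assoc, ← add_mul, hab, one_mul]
  have hL' : a * g0 + b * g1 = g0 + b * e := by
    rw [hg1, mul_add, ← add_assoc, ← add_mul, hab, one_mul]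
  have hR : a * (f0 * g0) + b * (f1 * g1)
      = f0 * g0 + (b * (f0 * e) + (b * (c * g0) + b * (c * e))) := by
    rw [hf1, hg1]
    calc a * (f0 * g0) + b * ((f0 + c) * (g0 + e))
        = (a * (f0 * g0) + b * (f0 * g0)) + (b * (f0 * e) + (b * (c * g0) + b * (c * e))) := by
          ring
      _ = f0 * g0 + (b * (f0 * e) + (b * (c * g0) + b * (c * e))) := by rw [h1]
  rw [hL, hL', hR]
  have h2 : (f0 + b * c) * (g0 + b * e)
      = f0 * g0 + (b * (f0 * e) + (b * (c * g0) + b * b * (c * e))) := by ring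
  rw [h2]
  gcongr
  calc b * b ≤ 1 * b := by gcongr
    _ = b := one_mul b

lemma harrisFin : ∀ (n : ℕ) (μ : Fin n → Bool → ℝ≥0∞)
    (_ : ∀ i, μ i false + μ i true = 1)
    (f g : (Fin n → Bool) → ℝ≥0∞) (_ : Monotone f) (_ : Monotone g),
    (∑ x : Fin n → Bool, (∏ i, μ i (x i)) * f x) *
      (∑ x : Fin n → Bool, (∏ i, μ i (x i)) * g x) ≤
    ∑ x : Fin n → Bool, (∏ i, μ i (x i)) * (f x * g x) := by
  intro n
  induction n with
  | zero =>
    intro μ hμ f g hf hg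
    simp
  | succ n ih =>
    intro μ hμ f g hf hg
    -- reindex sums over Fin (n+1) → Bool as double sums
    have key : ∀ F : (Fin (n+1) → Bool) → ℝ≥0∞,
        (∑ x : Fin (n+1) → Bool, F x)
          = ∑ y : Fin n → Bool, (F (Fin.cons false y) + F (Fin.cons true y)) := by
      intro F
      rw [← Equiv.sum_comp (Fin.consEquiv (fun _ : Fin (n+1) => Bool)) F]
      rw [Fintype.sum_prod_type]
      simp only [Fin.consEquiv, Equiv.coe_fn_mk, Fintype.sum_bool, add_comm]
      rw [← Finset.sum_add_distrib]
    set a := μ 0 false with ha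
    set b := μ 0 true with hb
    have hab : a + b = 1 := hμ 0
    set μ' : Fin n → Bool → ℝ≥0∞ := fun i => μ i.succ with hμ'def
    have hμ' : ∀ i, μ' i false + μ' i true = 1 := fun i => hμ i.succ
    set w : (Fin (n+1) → Bool) → ℝ≥0∞ := fun x => ∏ i, μ i (x i) with hw
    set w' : (Fin n → Bool) → ℝ≥0∞ := fun y => ∏ i, μ' i (y i) with hw'
    have wprod : ∀ (c : Bool) (y : Fin n → Bool), w (Fin.cons c y) = μ 0 c * w' y := by
      intro c y
      rw [hw]
      simp only [Fin.prod_univ_succ, Fin.cons_zero, Fin.cons_succ]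
      rfl
    set Av : ((Fin (n+1) → Bool) → ℝ≥0∞) → (Fin n → Bool) → ℝ≥0∞ :=
      fun h y => a * h (Fin.cons false y) + b * h (Fin.cons true y) with hAv
    have hE : ∀ h : (Fin (n+1) → Bool) → ℝ≥0∞,
        (∑ x : Fin (n+1) → Bool, w x * h x) = ∑ y : Fin n → Bool, w' y * Av h y := by
      intro h
      rw [key (fun x => w x * h x)]
      refine Finset.sum_congr rfl fun y _ => ?_
      rw [wprod, wprod, hAv]
      ring
    have cons_mono : ∀ (c : Bool) ⦃y y' : Fin n → Bool⦄, y ≤ y' →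
        (Fin.cons c y : Fin (n+1) → Bool) ≤ Fin.cons c y' := by
      intro c y y' hy i
      refine Fin.cases ?_ ?_ i
      · simp
      · intro j; simpa using hy j
    have cons_le : ∀ (y : Fin n → Bool), (Fin.cons false y : Fin (n+1) → Bool) ≤ Fin.cons true y := by
      intro y i
      refine Fin.cases ?_ ?_ i
      · simp
      · intro j; simp
    have hAvmono : ∀ h : (Fin (n+1) → Bool) → ℝ≥0∞, Monotone h → Monotone (Av h) := by
      intro h hh y y' hy
      exact add_le_add (mul_le_mul_right (hh (cons_mono false hy)) a)
        (mul_le_mul_right (hh (cons_mono true hy)) b)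
    rw [hE f, hE g, hE (fun x => f x * g x)]
    calc (∑ y : Fin n → Bool, w' y * Av f y) * ∑ y : Fin n → Bool, w' y * Av g y
        ≤ ∑ y : Fin n → Bool, w' y * (Av f y * Av g y) :=
          ih μ' hμ' (Av f) (Av g) (hAvmono f hf) (hAvmono g hg)
      _ ≤ ∑ y : Fin n → Bool, w' y * Av (fun x => f x * g x) y := by
          refine Finset.sum_le_sum fun y _ => mul_le_mul_right ?_ (w' y)
          exact two_point a b hab _ _ _ _ (hf (cons_le y)) (hg (cons_le y))

lemma harrisFintype {ι : Type} [Fintype ι] [DecidableEq ι] (μ : ι → Bool → ℝ≥0∞)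
    (hμ : ∀ i, μ i false + μ i true = 1)
    (f g : (ι → Bool) → ℝ≥0∞) (hf : Monotone f) (hg : Monotone g) :
    (∑ x : ι → Bool, (∏ i, μ i (x i)) * f x) *
      (∑ x : ι → Bool, (∏ i, μ i (x i)) * g x) ≤
    ∑ x : ι → Bool, (∏ i, μ i (x i)) * (f x * g x) := by
  classical
  set n := Fintype.card ι
  set e : ι ≃ Fin n := Fintype.equivFin ι
  set r : (Fin n → Bool) → (ι → Bool) := fun y i => y (e i) with hr
  have hrmono : Monotone r := fun y y' h i => h (e i)
  set μF : Fin n → Bool → ℝ≥0∞ := fun j => μ (e.symm j) with hμF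
  have hμF1 : ∀ j, μF j false + μF j true = 1 := fun j => hμ (e.symm j)
  have hsum : ∀ F : (ι → Bool) → ℝ≥0∞,
      (∑ x : ι → Bool, (∏ i, μ i (x i)) * F x)
        = ∑ y : Fin n → Bool, (∏ j, μF j (y j)) * F (r y) := by
    intro F
    rw [← Equiv.sum_comp (Equiv.arrowCongr e.symm (Equiv.refl Bool))
      (fun x : ι → Bool => (∏ i, μ i (x i)) * F x)]
    refine Finset.sum_congr rfl fun y _ => ?_
    have h1 : (Equiv.arrowCongr e.symm (Equiv.refl Bool)) y = r y := by
      funext i; simp [Equiv.arrowCongr, hr]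
    rw [h1]
    congr 1
    rw [← Equiv.prod_comp e.symm (fun i => μ i (r y i))]
    refine Finset.prod_congr rfl fun j _ => ?_
    simp [hr, hμF]
  rw [hsum f, hsum g, hsum (fun x => f x * g x)]
  exact harrisFin n μF hμF1 (f ∘ r) (g ∘ r) (hf.comp hrmono) (hg.comp hrmono)

section Cyl
open scoped Classical
variable {d : ℕ}

/-- extend a partial configuration on `S` by `false` elsewhere -/
noncomputable def extS (S : Finset (Edge d)) (x : ↥S → Bool) : Config d :=
  fun e => if h : e ∈ S then x ⟨e, h⟩ else false

def Cyl (S : Finset (Edge d)) (x : ↥S → Bool) : Set (Config d) :=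
  {ω | ∀ (e : Edge d) (h : e ∈ S), ω e = x ⟨e, h⟩}

def DetBy (S : Finset (Edge d)) (A : Set (Config d)) : Prop :=
  ∀ ⦃ω ω' : Config d⦄, (∀ e ∈ S, ω e = ω' e) → ω ∈ A → ω' ∈ A

lemma measurableSet_cyl (S : Finset (Edge d)) (x : ↥S → Bool) :
    MeasurableSet (Cyl S x) := by
  have : Cyl S x = ⋂ (e : ↥S), (fun ω : Config d => ω e.1) ⁻¹' {x e} := by
    ext ω
    simp only [Cyl, Set.mem_setOf_eq, Set.mem_iInter, Set.mem_preimage,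
      Set.mem_singleton_iff, Subtype.forall]
  rw [this]
  exact MeasurableSet.iInter fun e =>
    measurable_pi_apply e.1 (measurableSet_singleton _)

lemma P_cyl (P : Measure (Config d)) (p : ℝ≥0∞) (hP : IsBernoulli P p)
    (S : Finset (Edge d)) (x : ↥S → Bool) :
    P (Cyl S x) = ∏ i : ↥S, (if x i then p else 1 - p) := by
  have h1 : {ω : Config d | ∀ e ∈ S, ω e = extS S x e} = Cyl S x := by
    ext ω
    simp only [Set.mem_setOf_eq, Cyl]
    constructor
    · intro h e he; have := h e he; rwa [extS, dif_pos he] at this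
    · intro h e he; rw [extS, dif_pos he]; exact h e he
  have h2 := hP S (extS S x)
  rw [h1] at h2
  rw [h2, ← Finset.prod_coe_sort S (fun e => if extS S x e then p else 1 - p)]
  refine Finset.prod_congr rfl fun i _ => ?_
  congr 1
  rw [extS, dif_pos i.2]

lemma decomp (S : Finset (Edge d)) (A : Set (Config d)) (hdet : DetBy S A) :
    A = ⋃ x : ↥S → Bool, (if extS S x ∈ A then Cyl S x else ∅) := by
  classical
  ext ω
  constructor
  · intro hω
    refine Set.mem_iUnion.2 ⟨fun i => ω i.1, ?_⟩
    have hagree : ∀ e ∈ S, ω e = extS S (fun i : ↥S => ω i.1) e := by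
      intro e he; rw [extS, dif_pos he]
    have : extS S (fun i : ↥S => ω i.1) ∈ A := hdet hagree hω
    rw [if_pos this]
    intro e he; rfl
  · intro hω
    rcases Set.mem_iUnion.1 hω with ⟨x, hx⟩
    by_cases hmem : extS S x ∈ A
    · rw [if_pos hmem] at hx
      refine hdet (ω := extS S x) (fun e he => ?_) hmem
      rw [extS, dif_pos he, hx e he]
    · rw [if_neg hmem] at hx; exact absurd hx (Set.notMem_empty ω)

lemma detBy_measurableSet (S : Finset (Edge d)) (A : Set (Config d))
    (hdet : DetBy S A) : MeasurableSet A := by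
  classical
  rw [decomp S A hdet]
  refine MeasurableSet.iUnion fun x => ?_
  split
  · exact measurableSet_cyl S x
  · exact MeasurableSet.empty

lemma cyl_disjoint (S : Finset (Edge d)) {x y : ↥S → Bool} (hxy : x ≠ y) :
    Disjoint (Cyl S x) (Cyl S y) := by
  rw [Set.disjoint_left]
  intro ω hx hy
  apply hxy
  funext i
  rw [← hx i.1 i.2, ← hy i.1 i.2]

lemma P_detBy (P : Measure (Config d)) (p : ℝ≥0∞) (hP : IsBernoulli P p)
    (S : Finset (Edge d)) (A : Set (Config d)) (hdet : DetBy S A) :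
    P A = ∑ x : ↥S → Bool,
      (∏ i : ↥S, (if x i then p else 1 - p)) * (if extS S x ∈ A then 1 else 0) := by
  classical
  have hsub : ∀ x : ↥S → Bool, (if extS S x ∈ A then Cyl S x else ∅) ⊆ Cyl S x := by
    intro x; split
    · exact subset_rfl
    · exact Set.empty_subset _
  conv_lhs => rw [decomp S A hdet]
  rw [measure_iUnion ?_ ?_]
  · rw [tsum_fintype]
    refine Finset.sum_congr rfl fun x _ => ?_
    by_cases hmem : extS S x ∈ A
    · rw [if_pos hmem, if_pos hmem, mul_one, P_cyl P p hP]
    · rw [if_neg hmem, if_neg hmem, mul_zero, measure_empty]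
  · intro x y hxy
    exact Disjoint.mono (hsub x) (hsub y) (cyl_disjoint S hxy)
  · intro x
    split
    · exact measurableSet_cyl S x
    · exact MeasurableSet.empty

end Cyl

section Harris
open scoped Classical
variable {d : ℕ}

lemma extS_mono (S : Finset (Edge d)) {x y : ↥S → Bool} (hxy : x ≤ y) :
    extS S x ≤ extS S y := by
  intro e
  by_cases h : e ∈ S
  · simp only [extS, dif_pos h]; exact hxy ⟨e, h⟩
  · simp only [extS, dif_neg h]; exact le_refl _

lemma harrisDet (P : Measure (Config d)) (p : ℝ≥0∞) (hp : p ≤ 1)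
    (hP : IsBernoulli P p) (S : Finset (Edge d)) (A B : Set (Config d))
    (hdA : DetBy S A) (hdB : DetBy S B)
    (hiA : IncreasingEvent A) (hiB : IncreasingEvent B) :
    P A * P B ≤ P (A ∩ B) := by
  set μ : ↥S → Bool → ℝ≥0∞ := fun _ b => if b then p else 1 - p with hμdef
  have hμ : ∀ i, μ i false + μ i true = 1 := by
    intro i
    simp only [hμdef, Bool.false_eq_true, if_false, if_true]
    exact tsub_add_cancel_of_le hp
  set f : (↥S → Bool) → ℝ≥0∞ := fun x => if extS S x ∈ A then 1 else 0 with hfdef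
  set g : (↥S → Bool) → ℝ≥0∞ := fun x => if extS S x ∈ B then 1 else 0 with hgdef
  have hdAB : DetBy S (A ∩ B) := fun ω ω' h hm => ⟨hdA h hm.1, hdB h hm.2⟩
  have hf : Monotone f := by
    intro x y hxy
    simp only [hfdef]
    by_cases hx : extS S x ∈ A
    · rw [if_pos hx, if_pos (hiA (extS_mono S hxy) hx)]
    · rw [if_neg hx]; exact zero_le
  have hg : Monotone g := by
    intro x y hxy
    simp only [hgdef]
    by_cases hx : extS S x ∈ B
    · rw [if_pos hx, if_pos (hiB (extS_mono S hxy) hx)]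
    · rw [if_neg hx]; exact zero_le
  have hprod : ∀ x, f x * g x = if extS S x ∈ A ∩ B then 1 else 0 := by
    intro x
    by_cases hx : extS S x ∈ A <;> by_cases hy : extS S x ∈ B <;>
      simp [hfdef, hgdef, hx, hy, Set.mem_inter_iff]
  have hA' : P A = ∑ x : ↥S → Bool, (∏ i, μ i (x i)) * f x := P_detBy P p hP S A hdA
  have hB' : P B = ∑ x : ↥S → Bool, (∏ i, μ i (x i)) * g x := P_detBy P p hP S B hdB
  have hAB' : P (A ∩ B) = ∑ x : ↥S → Bool, (∏ i, μ i (x i)) * (f x * g x) := by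
    rw [P_detBy P p hP S (A ∩ B) hdAB]
    exact Finset.sum_congr rfl fun x _ => by rw [hprod]; simp [hμdef]
  rw [hA', hB', hAB']
  exact harrisFintype μ hμ f g hf hg

end Harris

section Topo
variable {d : ℕ}

noncomputable def edgeEnc (d : ℕ) : Encodable (Edge d) := inferInstance

noncomputable def En (d : ℕ) (n : ℕ) : Finset (Edge d) :=
  (Finset.range n).biUnion fun k => ((edgeEnc d).decode k).toFinset

lemma En_mono {m n : ℕ} (h : m ≤ n) : En d m ⊆ En d n :=
  Finset.biUnion_subset_biUnion_of_subset_left _ (Finset.range_subset_range.2 h)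

lemma mem_En (e : Edge d) : e ∈ En d ((edgeEnc d).encode e + 1) :=
  Finset.mem_biUnion.2 ⟨(edgeEnc d).encode e, Finset.mem_range.2 (Nat.lt_succ_self _),
    by simp [(edgeEnc d).encodek]⟩

lemma iInter_hull_subset (C : Set (Config d)) (hC : IsClosed C)
    (hInc : IncreasingEvent C) :
    (⋂ n, {ω : Config d | ∃ ξ ∈ C, ∀ e ∈ En d n, ξ e ≤ ω e}) ⊆ C := by
  intro ω hω
  simp only [Set.mem_iInter, Set.mem_setOf_eq] at hω
  set F : ℕ → Set (Config d) :=
    fun n => C ∩ {ξ | ∀ e ∈ En d n, ξ e ≤ ω e} with hF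
  have hclosed : ∀ n, IsClosed (F n) := by
    intro n
    refine hC.inter ?_
    have : {ξ : Config d | ∀ e ∈ En d n, ξ e ≤ ω e}
        = ⋂ (e : Edge d) (_ : e ∈ En d n), {ξ : Config d | ξ e ≤ ω e} := by
      ext ξ
      simp only [Set.mem_setOf_eq, Set.mem_iInter]
    rw [this]
    refine isClosed_iInter fun e => isClosed_iInter fun _ => ?_
    have : {ξ : Config d | ξ e ≤ ω e} = (fun ξ : Config d => ξ e) ⁻¹' {b : Bool | b ≤ ω e} := rfl
    rw [this]
    exact (isClosed_discrete _).preimage (continuous_apply e)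
  have hne : ∀ n, (F n).Nonempty := by
    intro n
    obtain ⟨ξ, hξC, hξle⟩ := hω n
    exact ⟨ξ, hξC, hξle⟩
  have hdec : ∀ n, F (n + 1) ⊆ F n := by
    intro n ξ hξ
    exact ⟨hξ.1, fun e he => hξ.2 e (En_mono (Nat.le_succ n) he)⟩
  obtain ⟨ξ, hξ⟩ := IsCompact.nonempty_iInter_of_sequence_nonempty_isCompact_isClosed
    F hdec hne ((hclosed 0).isCompact) hclosed
  simp only [Set.mem_iInter, hF, Set.mem_inter_iff, Set.mem_setOf_eq] at hξ
  have hle : ξ ≤ ω := fun e => (hξ ((edgeEnc d).encode e + 1)).2 e (mem_En e)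
  exact hInc hle (hξ 0).1

lemma harrisClosed (P : Measure (Config d)) [IsProbabilityMeasure P]
    (p : ℝ≥0∞) (hp : p ≤ 1) (hP : IsBernoulli P p)
    (C D : Set (Config d)) (hC : IsClosed C) (hD : IsClosed D)
    (hiC : IncreasingEvent C) (hiD : IncreasingEvent D) :
    P C * P D ≤ P (C ∩ D) := by
  set Cn : ℕ → Set (Config d) :=
    fun n => {ω | ∃ ξ ∈ C, ∀ e ∈ En d n, ξ e ≤ ω e} with hCn
  set Dn : ℕ → Set (Config d) :=
    fun n => {ω | ∃ ξ ∈ D, ∀ e ∈ En d n, ξ e ≤ ω e} with hDn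
  have hdet : ∀ (E : Set (Config d)) n, DetBy (En d n)
      {ω | ∃ ξ ∈ E, ∀ e ∈ En d n, ξ e ≤ ω e} := by
    intro E n ω ω' hag ⟨ξ, hξE, hle⟩
    exact ⟨ξ, hξE, fun e he => (hag e he) ▸ hle e he⟩
  have hinc : ∀ (E : Set (Config d)) n, IncreasingEvent
      {ω : Config d | ∃ ξ ∈ E, ∀ e ∈ En d n, ξ e ≤ ω e} := by
    intro E n ω ω' hle ⟨ξ, hξE, h⟩
    exact ⟨ξ, hξE, fun e he => le_trans (h e he) (hle e)⟩
  have hsubC : ∀ n, C ⊆ Cn n := fun n ω hω => ⟨ω, hω, fun e _ => le_refl _⟩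
  have hsubD : ∀ n, D ⊆ Dn n := fun n ω hω => ⟨ω, hω, fun e _ => le_refl _⟩
  have hmeas : ∀ n, MeasurableSet (Cn n ∩ Dn n) := fun n =>
    (detBy_measurableSet _ _ (hdet C n)).inter (detBy_measurableSet _ _ (hdet D n))
  have hanti : Antitone (fun n => Cn n ∩ Dn n) := by
    intro m n h ω hω
    refine ⟨?_, ?_⟩
    · obtain ⟨ξ, h1, h2⟩ := hω.1; exact ⟨ξ, h1, fun e he => h2 e (En_mono h he)⟩
    · obtain ⟨ξ, h1, h2⟩ := hω.2; exact ⟨ξ, h1, fun e he => h2 e (En_mono h he)⟩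
  have htend := tendsto_measure_iInter_atTop (μ := P)
    (fun n => (hmeas n).nullMeasurableSet) hanti ⟨0, measure_ne_top _ _⟩
  have hbound : ∀ n, P C * P D ≤ P (Cn n ∩ Dn n) := by
    intro n
    calc P C * P D ≤ P (Cn n) * P (Dn n) :=
          mul_le_mul' (measure_mono (hsubC n)) (measure_mono (hsubD n))
      _ ≤ P (Cn n ∩ Dn n) := harrisDet P p hp hP (En d n) _ _
          (hdet C n) (hdet D n) (hinc C n) (hinc D n)
  have hlim : P C * P D ≤ P (⋂ n, Cn n ∩ Dn n) :=
    ge_of_tendsto htend (Filter.Eventually.of_forall hbound)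
  refine le_trans hlim (measure_mono ?_)
  have h1 : (⋂ n, Cn n ∩ Dn n) ⊆ ⋂ n, Cn n := fun ω hω =>
    Set.mem_iInter.2 fun n => (Set.mem_iInter.1 hω n).1
  have h2 : (⋂ n, Cn n ∩ Dn n) ⊆ ⋂ n, Dn n := fun ω hω =>
    Set.mem_iInter.2 fun n => (Set.mem_iInter.1 hω n).2
  exact Set.subset_inter
    (h1.trans (iInter_hull_subset C hC hiC))
    (h2.trans (iInter_hull_subset D hD hiD))

end Topo

section Main
variable {d : ℕ}

lemma harrisInc (P : Measure (Config d)) [IsProbabilityMeasure P]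
    (p : ℝ≥0∞) (hp : p ≤ 1) (hP : IsBernoulli P p)
    (A B : Set (Config d)) (hA : MeasurableSet A) (hB : MeasurableSet B)
    (hiA : IncreasingEvent A) (hiB : IncreasingEvent B) :
    P A * P B ≤ P (A ∩ B) := by
  -- continuity of the pointwise sup
  have cont : Continuous (fun q : Config d × Config d => q.1 ⊔ q.2) := by
    refine continuous_pi fun e => ?_
    have : (fun q : Config d × Config d => (q.1 ⊔ q.2) e)
        = (fun bb : Bool × Bool => bb.1 ⊔ bb.2) ∘ (fun q => (q.1 e, q.2 e)) := rfl
    rw [this]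
    exact Continuous.comp continuous_of_discreteTopology
      (Continuous.prodMk ((continuous_apply e).comp continuous_fst)
        ((continuous_apply e).comp continuous_snd))
  -- from a compact subset, produce a closed increasing subset
  have hull : ∀ (E : Set (Config d)) (K : Set (Config d)), IncreasingEvent E →
      K ⊆ E → IsCompact K → ∃ H, K ⊆ H ∧ H ⊆ E ∧ IsClosed H ∧ IncreasingEvent H := by
    intro E K hiE hKE hK
    refine ⟨{ω | ∃ κ ∈ K, κ ≤ ω}, fun ω hω => ⟨ω, hω, le_refl _⟩,
      fun ω hω => ?_, ?_, fun ω ω' hle hω => ?_⟩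
    · obtain ⟨κ, hκ, hκω⟩ := hω; exact hiE hκω (hKE hκ)
    · have him : {ω : Config d | ∃ κ ∈ K, κ ≤ ω}
          = (fun q : Config d × Config d => q.1 ⊔ q.2) '' (K ×ˢ Set.univ) := by
        ext ω
        constructor
        · rintro ⟨κ, hκ, hκω⟩
          exact ⟨(κ, ω), ⟨hκ, trivial⟩, sup_eq_right.2 hκω⟩
        · rintro ⟨⟨κ, χ⟩, ⟨hκ, -⟩, rfl⟩
          exact ⟨κ, hκ, le_sup_left⟩
      rw [him]
      exact ((hK.prod isCompact_univ).image cont).isClosed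
    · obtain ⟨κ, hκ, hκω⟩ := hω; exact ⟨κ, hκ, le_trans hκω hle⟩
  refine ENNReal.le_of_forall_pos_le_add fun ε hε _ => ?_
  set δ : ℝ≥0∞ := min ((ε : ℝ≥0∞) / 3) 1 with hδ
  have hδ0 : δ ≠ 0 := by
    have : 0 < δ := lt_min
      (ENNReal.div_pos (by exact_mod_cast hε.ne') (by norm_num)) one_pos
    exact this.ne'
  have hδ1 : δ ≤ 1 := min_le_right _ _
  have hδε : δ + δ + δ ≤ ε := by
    calc δ + δ + δ ≤ (ε : ℝ≥0∞) / 3 + (ε : ℝ≥0∞) / 3 + (ε : ℝ≥0∞) / 3 := by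
          gcongr <;> exact min_le_left _ _
      _ = ε := ENNReal.add_thirds _
  obtain ⟨KA, hKA_sub, hKA_c, hKA_lt⟩ := hA.exists_isCompact_lt_add (measure_ne_top P A) hδ0
  obtain ⟨KB, hKB_sub, hKB_c, hKB_lt⟩ := hB.exists_isCompact_lt_add (measure_ne_top P B) hδ0
  obtain ⟨HA, hKHA, hHAA, hHAcl, hHAinc⟩ := hull A KA hiA hKA_sub hKA_c
  obtain ⟨HB, hKHB, hHBB, hHBcl, hHBinc⟩ := hull B KB hiB hKB_sub hKB_c
  have hPA : P A ≤ P HA + δ := le_trans hKA_lt.le (by gcongr <;> exact measure_mono hKHA)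
  have hPB : P B ≤ P HB + δ := le_trans hKB_lt.le (by gcongr <;> exact measure_mono hKHB)
  have hH : P HA * P HB ≤ P (HA ∩ HB) := harrisClosed P p hp hP HA HB hHAcl hHBcl hHAinc hHBinc
  have hone : ∀ E : Set (Config d), P E ≤ 1 := fun E => prob_le_one
  calc P A * P B ≤ (P HA + δ) * (P HB + δ) := mul_le_mul' hPA hPB
    _ = P HA * P HB + (P HA * δ + δ * P HB + δ * δ) := by ring
    _ ≤ P (HA ∩ HB) + (1 * δ + δ * 1 + δ * 1) := by
        gcongr <;> first | exact hH | exact hone _ | exact hδ1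
    _ = P (HA ∩ HB) + (δ + δ + δ) := by ring
    _ ≤ P (A ∩ B) + ε := by
        have hm : P (HA ∩ HB) ≤ P (A ∩ B) :=
          measure_mono (Set.inter_subset_inter hHAA hHBB)
        gcongr <;> first | exact hm | exact hδε

end Main


/-- FKG inequality for events: increasing events are positively correlated, and
an increasing and a decreasing event are negatively correlated. -/
theorem fkg_events {d : ℕ} (P : Measure (Config d)) [IsProbabilityMeasure P]
    (p : ℝ≥0∞) (hp : p ≤ 1) (hP : IsBernoulli P p)
    (A B : Set (Config d)) (hA : MeasurableSet A) (hB : MeasurableSet B) :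
    (IncreasingEvent A → IncreasingEvent B → P A * P B ≤ P (A ∩ B)) ∧
    (IncreasingEvent A → DecreasingEvent B → P (A ∩ B) ≤ P A * P B) := by
  constructor
  · intro hiA hiB
    exact harrisInc P p hp hP A B hA hB hiA hiB
  · intro hiA hdB
    have h1 : P A * P Bᶜ ≤ P (A ∩ Bᶜ) :=
      harrisInc P p hp hP A Bᶜ hA hB.compl hiA hdB
    have h2 : P (A ∩ B) + P (A ∩ Bᶜ) = P A := by
      rw [← Set.diff_eq]
      exact measure_inter_add_diff A hB
    have h3 : P A * P B + P A * P Bᶜ = P A := by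
      rw [← mul_add, prob_add_prob_compl hB, mul_one]
    have h4 : P (A ∩ B) + P A * P Bᶜ ≤ P A * P B + P A * P Bᶜ := by
      calc P (A ∩ B) + P A * P Bᶜ ≤ P (A ∩ B) + P (A ∩ Bᶜ) := by gcongr
        _ = P A := h2
        _ = P A * P B + P A * P Bᶜ := h3.symm
    exact (ENNReal.add_le_add_iff_right
      (ENNReal.mul_ne_top (measure_ne_top P A) (measure_ne_top P Bᶜ))).1 h4
end

section
/- (Russo's formula) Let A be an increasing event in Bernoulli bond percolation depending only on finitely many edges. Then the map p ↦ P_p[A] is differentiable and d/dp P_p[A] = Σ_{e ∈ E} P_p[e is pivotal for A]. -/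
open MeasureTheory

open ENNReal
/-- `P` is the family of Bernoulli bond percolation measures: for `p ∈ [0,1]`,
`P p` is the product of Bernoulli(`p`) measures on the edges. -/
def IsBernoulliFamily {d : ℕ} (P : ℝ → Measure (Config d)) : Prop :=
  (∀ p, IsProbabilityMeasure (P p)) ∧
  ∀ p ∈ Set.Icc (0 : ℝ) 1, ∀ (S : Finset (Edge d)) (f : Edge d → Bool),
    P p {ω | ∀ e ∈ S, ω e = f e} =
      ∏ e ∈ S, ENNReal.ofReal (if f e then p else 1 - p)

/-- `A` depends only on the edges in the finite set `S`. -/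
def EventDependsOn {d : ℕ} (A : Set (Config d)) (S : Finset (Edge d)) : Prop :=
  ∀ ω ω' : Config d, (∀ e ∈ S, ω e = ω' e) → (ω ∈ A ↔ ω' ∈ A)

/-- The configuration obtained from `ω` by flipping the state of the edge `e`. -/
def flipEdge {d : ℕ} (e : Edge d) (ω : Config d) : Config d :=
  Function.update ω e (!(ω e))

/-- The event that the edge `e` is pivotal for `A`: flipping the state of `e`
changes whether `A` occurs. -/
def Pivotal {d : ℕ} (A : Set (Config d)) (e : Edge d) : Set (Config d) :=
  {ω | ¬ (ω ∈ A ↔ flipEdge e ω ∈ A)}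

namespace RussoProof

open Classical

noncomputable section

variable {d : ℕ}

/-- Extend a pattern on `S` by `false` outside `S`. -/
def ext (S : Finset (Edge d)) (g : {e // e ∈ S} → Bool) : Config d :=
  fun e => if h : e ∈ S then g ⟨e, h⟩ else false

lemma ext_update (S : Finset (Edge d)) (g : {e // e ∈ S} → Bool)
    (i : {e // e ∈ S}) (b : Bool) :
    ext S (Function.update g i b) = Function.update (ext S g) i.1 b := by
  funext e
  by_cases he : e = i.1
  · subst he
    simp [ext, i.2, Function.update_self]
  · rw [Function.update_of_ne he]
    by_cases heS : e ∈ S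
    · simp only [ext, dif_pos heS]
      rw [Function.update_of_ne (fun h => he (congrArg Subtype.val h))]
    · simp [ext, heS]

/-- Patterns on `S` whose extension lies in `A`. -/
def GA (S : Finset (Edge d)) (A : Set (Config d)) : Finset ({e // e ∈ S} → Bool) :=
  Finset.univ.filter (fun g => ext S g ∈ A)

/-- The Bernoulli weight of a pattern. -/
def W (S : Finset (Edge d)) (p : ℝ) (g : {e // e ∈ S} → Bool) : ℝ :=
  ∏ e ∈ S, (if ext S g e then p else 1 - p)

lemma cyl_measurable (S : Finset (Edge d)) (f : Config d) :
    MeasurableSet {ω : Config d | ∀ e ∈ S, ω e = f e} := by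
  have : {ω : Config d | ∀ e ∈ S, ω e = f e}
      = ⋂ e ∈ S, (fun ω : Config d => ω e) ⁻¹' {f e} := by
    ext ω
    simp only [Set.mem_setOf_eq, Set.mem_iInter, Set.mem_preimage, Set.mem_singleton_iff]
  rw [this]
  exact MeasurableSet.biInter S.countable_toSet
    fun e _ => (measurable_pi_apply e) (measurableSet_singleton _)

/-- Decomposition of the probability of an event depending on `S` as a sum of
cylinder probabilities. -/
lemma measure_eq (P : ℝ → Measure (Config d)) (hP : IsBernoulliFamily P)
    {q : ℝ} (hq : q ∈ Set.Icc (0 : ℝ) 1) (S : Finset (Edge d)) (A : Set (Config d))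
    (hS : EventDependsOn A S) :
    (P q A).toReal = ∑ g ∈ GA S A, W S q g := by
  haveI := hP.1 q
  have hA_eq : A = ⋃ g ∈ GA S A, {ω : Config d | ∀ e ∈ S, ω e = ext S g e} := by
    ext ω
    simp only [Set.mem_iUnion, exists_prop, GA, Finset.mem_filter, Finset.mem_univ, true_and]
    constructor
    · intro hω
      refine ⟨fun i => ω i.1, ?_, ?_⟩
      · refine (hS ω _ (fun e he => ?_)).mp hω
        unfold ext; rw [dif_pos he]
      · intro e he
        show ω e = ext S (fun i => ω i.1) e
        unfold ext; rw [dif_pos he]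
    · rintro ⟨g, hgA, hωg⟩
      exact (hS ω (ext S g) hωg).mpr hgA
  have hdisj : (↑(GA S A) : Set ({e // e ∈ S} → Bool)).PairwiseDisjoint
      (fun g => {ω : Config d | ∀ e ∈ S, ω e = ext S g e}) := by
    intro g _ g' _ hne
    refine Set.disjoint_left.mpr fun ω hω hω' => hne ?_
    funext i
    have h1 := hω i.1 i.2
    have h2 := hω' i.1 i.2
    have e1 : ext S g i.1 = g i := by simp [ext, i.2]
    have e2 : ext S g' i.1 = g' i := by simp [ext, i.2]
    rw [e1] at h1; rw [e2] at h2
    rw [← h1, ← h2]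
  conv_lhs => rw [hA_eq]
  rw [measure_biUnion_finset hdisj (fun g _ => cyl_measurable S (ext S g)),
    ENNReal.toReal_sum (fun g _ => measure_ne_top _ _)]
  refine Finset.sum_congr rfl fun g _ => ?_
  rw [hP.2 q hq S (ext S g), ENNReal.toReal_prod]
  refine Finset.prod_congr rfl fun e _ => ?_
  rw [ENNReal.toReal_ofReal]
  split_ifs
  · exact hq.1
  · linarith [hq.2]

/-- Pairing a pattern with its flip at one coordinate. -/
lemma sum_pair {ι : Type*} [Fintype ι] [DecidableEq ι] (i : ι) (F : (ι → Bool) → ℝ) :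
    ∑ g : ι → Bool, F g
      = ∑ g ∈ Finset.univ.filter (fun g => g i = true),
          (F g + F (Function.update g i false)) := by
  rw [Finset.sum_add_distrib,
    ← Finset.sum_filter_add_sum_filter_not Finset.univ (fun g => g i = true) F]
  congr 1
  refine Finset.sum_bij' (fun g _ => Function.update g i true)
    (fun g _ => Function.update g i false) ?_ ?_ ?_ ?_ ?_
  · intro g _; simp
  · intro g _; simp
  · intro g hg
    simp only [Finset.mem_filter, Finset.mem_univ, true_and, Bool.not_eq_true] at hg
    rw [Function.update_idem, ← hg, Function.update_eq_self]
  · intro g hg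
    simp only [Finset.mem_filter, Finset.mem_univ, true_and] at hg
    rw [Function.update_idem, ← hg, Function.update_eq_self]
  · intro g hg
    simp only [Finset.mem_filter, Finset.mem_univ, true_and, Bool.not_eq_true] at hg
    rw [Function.update_idem, ← hg, Function.update_eq_self]

/-- The key combinatorial identity behind Russo's formula. -/
lemma key (S : Finset (Edge d)) (A : Set (Config d)) (hinc : IncreasingEvent A)
    {e : Edge d} (he : e ∈ S) (p : ℝ) :
    (∑ g ∈ GA S A,
        (∏ e' ∈ S.erase e, (if ext S g e' then p else 1 - p))
          * (if ext S g e then (1 : ℝ) else -1))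
      = ∑ g ∈ GA S (Pivotal A e), W S p g := by
  set i : {e' // e' ∈ S} := ⟨e, he⟩ with hi
  rw [GA, GA, Finset.sum_filter, Finset.sum_filter, sum_pair i, sum_pair i]
  refine Finset.sum_congr rfl fun g hg => ?_
  have hgi : g i = true := (Finset.mem_filter.mp hg).2
  have hge : ext S g e = true := by
    show (if h : e ∈ S then g ⟨e, h⟩ else false) = true
    rw [dif_pos he]; exact hgi
  set g' := Function.update g i false with hg'
  have hext' : ext S g' = Function.update (ext S g) e false := ext_update S g i false
  have hg'e : ext S g' e = false := by rw [hext']; simp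
  have hQ : (∏ e' ∈ S.erase e, (if ext S g' e' then p else 1 - p))
      = ∏ e' ∈ S.erase e, (if ext S g e' then p else 1 - p) := by
    refine Finset.prod_congr rfl fun e' he' => ?_
    have hne : e' ≠ e := (Finset.mem_erase.mp he').1
    rw [hext', Function.update_of_ne hne]
  have hflip : flipEdge e (ext S g) = ext S g' := by
    rw [hext']
    show Function.update (ext S g) e (!(ext S g e)) = _
    rw [hge]
    rfl
  have hflip' : flipEdge e (ext S g') = ext S g := by
    show Function.update (ext S g') e (!(ext S g' e)) = _
    rw [hg'e, hext', Function.update_idem]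
    show Function.update (ext S g) e true = ext S g
    conv_lhs => rw [← hge]
    exact Function.update_eq_self _ _
  have hle : ext S g' ≤ ext S g := by
    intro e'
    by_cases hee : e' = e
    · subst hee; rw [hg'e]; exact Bool.false_le _
    · rw [hext', Function.update_of_ne hee]
  have hpiv1 : ext S g ∈ Pivotal A e ↔ ¬ (ext S g ∈ A ↔ ext S g' ∈ A) := by
    simp [Pivotal, hflip]
  have hpiv2 : ext S g' ∈ Pivotal A e ↔ ¬ (ext S g' ∈ A ↔ ext S g ∈ A) := by
    simp [Pivotal, hflip']
  have hW : W S p g = p * ∏ e' ∈ S.erase e, (if ext S g e' then p else 1 - p) := by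
    rw [W, ← Finset.mul_prod_erase S _ he, hge]; simp
  have hW' : W S p g' = (1 - p) * ∏ e' ∈ S.erase e, (if ext S g e' then p else 1 - p) := by
    rw [W, ← Finset.mul_prod_erase S _ he, hg'e, hQ]; simp
  by_cases hA1 : ext S g ∈ A <;> by_cases hA2 : ext S g' ∈ A
  · have hp1 : ext S g ∉ Pivotal A e := by rw [hpiv1]; tauto
    have hp2 : ext S g' ∉ Pivotal A e := by rw [hpiv2]; tauto
    simp [hA1, hA2, hp1, hp2, hge, hg'e, hQ]
  · have hp1 : ext S g ∈ Pivotal A e := by rw [hpiv1]; tauto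
    have hp2 : ext S g' ∈ Pivotal A e := by rw [hpiv2]; tauto
    simp only [hA1, hA2, hp1, hp2, if_true, if_false, if_pos, hge, hg'e, hQ, hW, hW']
    ring
  · exact absurd (hinc hle hA2) hA1
  · have hp1 : ext S g ∉ Pivotal A e := by rw [hpiv1]; tauto
    have hp2 : ext S g' ∉ Pivotal A e := by rw [hpiv2]; tauto
    simp [hA1, hA2, hp1, hp2]

/-- Differentiation of the polynomial expression. -/
lemma hasDeriv (S : Finset (Edge d)) (A : Set (Config d)) (p : ℝ) :
    HasDerivAt (fun q => ∑ g ∈ GA S A, W S q g)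
      (∑ g ∈ GA S A, ∑ e ∈ S,
        (∏ e' ∈ S.erase e, (if ext S g e' then p else 1 - p))
          * (if ext S g e then (1 : ℝ) else -1)) p := by
  refine HasDerivAt.fun_sum fun g _ => ?_
  have h := HasDerivAt.fun_finsetProd (u := S)
    (f := fun e q => if ext S g e then q else 1 - q)
    (f' := fun e => if ext S g e then (1 : ℝ) else -1) (x := p) ?_
  · simpa [W, smul_eq_mul] using h
  · intro e _
    by_cases hb : ext S g e = true
    · simpa [hb] using hasDerivAt_id' p
    · simpa [hb] using (hasDerivAt_const p (1 : ℝ)).fun_sub (hasDerivAt_id' p)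

end

end RussoProof

/-- Russo's formula: for an increasing event `A` depending on finitely many
edges, `d/dp P_p[A] = Σ_e P_p[e is pivotal for A]`. -/
theorem russo {d : ℕ} (P : ℝ → Measure (Config d)) (hP : IsBernoulliFamily P)
    (A : Set (Config d)) (hA : MeasurableSet A) (hinc : IncreasingEvent A)
    (S : Finset (Edge d)) (hS : EventDependsOn A S)
    (p : ℝ) (hp : p ∈ Set.Icc (0 : ℝ) 1) :
    HasDerivWithinAt (fun q => (P q A).toReal)
      (∑' e : Edge d, (P p (Pivotal A e)).toReal) (Set.Icc 0 1) p := by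
  classical
  open RussoProof in
  have hpiv_dep : ∀ e ∈ S, EventDependsOn (Pivotal A e) S := by
    intro e he ω ω' h
    have h2 : ∀ e' ∈ S, flipEdge e ω e' = flipEdge e ω' e' := by
      intro e' he'
      by_cases hee : e' = e
      · subst hee; simp [flipEdge, h e' he]
      · simp [flipEdge, Function.update_of_ne hee, h e' he']
    simp only [Pivotal, Set.mem_setOf_eq, hS ω ω' h, hS (flipEdge e ω) (flipEdge e ω') h2]
  have hpiv_empty : ∀ e, e ∉ S → Pivotal A e = ∅ := by
    intro e he
    rw [Set.eq_empty_iff_forall_notMem]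
    intro ω hω
    refine hω ?_
    refine hS ω (flipEdge e ω) fun e' he' => ?_
    have hne : e' ≠ e := fun h => he (h ▸ he')
    exact (Function.update_of_ne hne _ _).symm
  have htsum : (∑' e : Edge d, (P p (Pivotal A e)).toReal)
      = ∑ e ∈ S, (P p (Pivotal A e)).toReal := by
    refine tsum_eq_sum fun e he => by rw [hpiv_empty e he]; simp
  have heq : ∀ q ∈ Set.Icc (0 : ℝ) 1, (P q A).toReal = ∑ g ∈ GA S A, W S q g :=
    fun q hq => measure_eq P hP hq S A hS
  have hd := hasDeriv S A p
  have hD : (∑ g ∈ GA S A, ∑ e ∈ S,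
        (∏ e' ∈ S.erase e, (if ext S g e' then p else 1 - p))
          * (if ext S g e then (1 : ℝ) else -1))
      = ∑ e ∈ S, (P p (Pivotal A e)).toReal := by
    rw [Finset.sum_comm]
    refine Finset.sum_congr rfl fun e he => ?_
    rw [key S A hinc he p, ← measure_eq P hP hp S (Pivotal A e) (hpiv_dep e he)]
  rw [hD] at hd
  rw [htsum]
  exact hd.hasDerivWithinAt.congr (fun q hq => heq q hq) (heq p hp)
end

section
/- (OSSS inequality) Let Ω = Π_{i∈I} Ω_i be a finite product of probability spaces with product measure P, f : Ω → [0,1] measurable, and T a (randomized) decision-tree algorithm determining f. Then Var(f) ≤ Σ_{i∈I} δ_i(T)·Inf_i(f), where δ_i(T) is the probability T reveals coordinate i and Inf_i(f) = P(f(ω) ≠ f(ω^{(i)})) with ω^{(i)} obtained from ω by independently resampling coordinate i. -/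
open MeasureTheory ProbabilityTheory ENNReal

/-- A decision tree over the product space `Π i, Ω i`: at each internal node it
queries a coordinate and branches on its value; leaves carry the output. -/
inductive DTree (I : Type*) (Ω : I → Type*) (α : Type*) where
  | leaf : α → DTree I Ω α
  | node : (i : I) → ((Ω i) → DTree I Ω α) → DTree I Ω α

/-- The output computed by a decision tree on the input `ω`. -/
def DTree.eval {I : Type*} {Ω : I → Type*} {α : Type*} :
    DTree I Ω α → (∀ i, Ω i) → α
  | .leaf a, _ => a
  | .node i c, ω => (c (ω i)).eval ω

/-- The set of coordinates revealed (queried) by the tree on the input `ω`. -/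
def DTree.revealed {I : Type*} {Ω : I → Type*} {α : Type*} :
    DTree I Ω α → (∀ i, Ω i) → Set I
  | .leaf _, _ => ∅
  | .node i c, ω => insert i ((c (ω i)).revealed ω)

set_option linter.unusedSectionVars false
set_option maxHeartbeats 4000000

namespace OSSSAux

variable {I : Type*} [DecidableEq I] {Ω : I → Type*}

/-- The hybrid: follow the tree on driver `d`, replacing in the base `b` every
queried coordinate by its `d`-value. -/
def hyb : DTree I Ω ℝ → (∀ j, Ω j) → (∀ j, Ω j) → (∀ j, Ω j)
  | .leaf _, b, _ => b
  | .node i c, b, d => hyb (c (d i)) (Function.update b i (d i)) d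

lemma hyb_apply_eq (S : DTree I Ω ℝ) (b d : ∀ j, Ω j) (j : I) (h : b j = d j) :
    hyb S b d j = d j := by
  induction S generalizing b with
  | leaf a => exact h
  | node i c ih =>
    simp only [hyb]
    apply ih
    rcases eq_or_ne j i with rfl | hne
    · simp
    · simpa [Function.update_of_ne hne] using h

lemma eval_hyb (S : DTree I Ω ℝ) (b d : ∀ j, Ω j) :
    S.eval (hyb S b d) = S.eval d := by
  induction S generalizing b with
  | leaf a => rfl
  | node i c ih =>
    have hkey : hyb (c (d i)) (Function.update b i (d i)) d i = d i := by
      apply hyb_apply_eq; simp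
    simp only [hyb, DTree.eval, hkey, ih]

/-- `Avoids S R`: along every path, `S` never queries a coordinate of `R`,
and never queries the same coordinate twice. -/
def Avoids : DTree I Ω ℝ → Set I → Prop
  | .leaf _, _ => True
  | .node i c, R => i ∉ R ∧ ∀ x, Avoids (c x) (insert i R)

lemma hyb_update_driver {S : DTree I Ω ℝ} {R : Set I} (hA : Avoids S R) {r : I}
    (hr : r ∈ R) (b d : ∀ j, Ω j) (x : Ω r) :
    hyb S b (Function.update d r x) = hyb S b d := by
  induction S generalizing R b with
  | leaf a => rfl
  | node i c ih =>
    obtain ⟨hi, hsub⟩ := hA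
    have hir : i ≠ r := fun h => hi (h ▸ hr)
    have hd : Function.update d r x i = d i := Function.update_of_ne hir _ _
    simp only [hyb, hd]
    exact ih (d i) (hsub (d i)) (Set.mem_insert_of_mem _ hr) _
lemma revealed_update_driver {S : DTree I Ω ℝ} {R : Set I} (hA : Avoids S R) {r : I}
    (hr : r ∈ R) (d : ∀ j, Ω j) (x : Ω r) :
    S.revealed (Function.update d r x) = S.revealed d := by
  induction S generalizing R with
  | leaf a => rfl
  | node i c ih =>
    obtain ⟨hi, hsub⟩ := hA
    have hir : i ≠ r := fun h => hi (h ▸ hr)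
    have hd : Function.update d r x i = d i := Function.update_of_ne hir _ _
    simp only [DTree.revealed, hd]
    rw [ih (d i) (hsub (d i)) (Set.mem_insert_of_mem _ hr)]

lemma not_mem_revealed {S : DTree I Ω ℝ} {R : Set I} (hA : Avoids S R) {r : I}
    (hr : r ∈ R) (d : ∀ j, Ω j) : r ∉ S.revealed d := by
  induction S generalizing R with
  | leaf a => simp [DTree.revealed]
  | node i c ih =>
    obtain ⟨hi, hsub⟩ := hA
    have hir : r ≠ i := fun h => hi (h ▸ hr)
    simp only [DTree.revealed, Set.mem_insert_iff, not_or]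
    exact ⟨hir, ih (d i) (hsub (d i)) (Set.mem_insert_of_mem _ hr)⟩

/-- Pruning: simplify a tree using an environment of already-known values, so
that no coordinate is ever queried twice (nor any already-known coordinate). -/
def prune : DTree I Ω ℝ → (∀ j, Option (Ω j)) → DTree I Ω ℝ
  | .leaf a, _ => .leaf a
  | .node i c, e =>
    match e i with
    | some v => prune (c v) e
    | none => .node i fun x => prune (c x) (Function.update e i (some x))

def Econs (e : ∀ j, Option (Ω j)) (ω : ∀ j, Ω j) : Prop :=
  ∀ j v, e j = some v → ω j = v

lemma econs_update {e : ∀ j, Option (Ω j)} {ω : ∀ j, Ω j} (h : Econs e ω) (i : I) :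
    Econs (Function.update e i (some (ω i))) ω := by
  intro j v hj
  rcases eq_or_ne j i with rfl | hne
  · simp at hj; exact hj
  · exact h j v (by simpa [Function.update_of_ne hne] using hj)

lemma prune_eval {S : DTree I Ω ℝ} {e : ∀ j, Option (Ω j)} {ω : ∀ j, Ω j}
    (h : Econs e ω) : (prune S e).eval ω = S.eval ω := by
  induction S generalizing e with
  | leaf a => rfl
  | node i c ih =>
    cases he : e i with
    | some v =>
      have hv : ω i = v := h i v he
      simp only [prune, he, DTree.eval]
      rw [ih v h, hv]
    | none =>
      simp only [prune, he, DTree.eval]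
      exact ih (ω i) (econs_update h i)

lemma prune_revealed {S : DTree I Ω ℝ} {e : ∀ j, Option (Ω j)} {ω : ∀ j, Ω j}
    (h : Econs e ω) : (prune S e).revealed ω ⊆ S.revealed ω := by
  induction S generalizing e with
  | leaf a => simp [prune]
  | node i c ih =>
    cases he : e i with
    | some v =>
      have hv : ω i = v := h i v he
      simp only [prune, he, DTree.revealed]
      refine (ih v h).trans ?_
      rw [hv]
      exact Set.subset_insert _ _
    | none =>
      simp only [prune, he, DTree.revealed]
      exact Set.insert_subset_insert (ih (ω i) (econs_update h i))

lemma dom_update (e : ∀ j, Option (Ω j)) (i : I) (x : Ω i) :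
    {j | (Function.update e i (some x) j).isSome} = insert i {j | (e j).isSome} := by
  ext j
  rcases eq_or_ne j i with rfl | hne
  · simp
  · simp [Function.update_of_ne hne, hne]

lemma prune_avoids (S : DTree I Ω ℝ) (e : ∀ j, Option (Ω j)) :
    Avoids (prune S e) {j | (e j).isSome} := by
  induction S generalizing e with
  | leaf a => trivial
  | node i c ih =>
    cases he : e i with
    | some v => simpa only [prune, he] using ih v e
    | none =>
      simp only [prune, he]
      refine ⟨by simp [he], fun x => ?_⟩
      have := ih x (Function.update e i (some x))
      rwa [dom_update] at this

end OSSSAux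

namespace OSSSAux

variable {I : Type*} [Fintype I] [DecidableEq I] {Ω : I → Type*}
  [∀ i, MeasurableSpace (Ω i)]

/-- Override `ω` by the partial environment `e`. -/
def ovr (e : ∀ j, Option (Ω j)) (ω : ∀ j, Ω j) : ∀ j, Ω j :=
  fun j => (e j).getD (ω j)

lemma ovr_none (ω : ∀ j, Ω j) : ovr (fun _ => none) ω = ω := rfl

lemma ovr_update (e : ∀ j, Option (Ω j)) (i : I) (x : Ω i) (ω : ∀ j, Ω j) :
    ovr (Function.update e i (some x)) ω = Function.update (ovr e ω) i x := by
  funext j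
  rcases eq_or_ne j i with rfl | hne
  · simp [ovr]
  · simp [ovr, Function.update_of_ne hne]

lemma ovr_update_arg {e : ∀ j, Option (Ω j)} {i : I} (hei : e i = none)
    (ω : ∀ j, Ω j) (u : Ω i) :
    ovr e (Function.update ω i u) = Function.update (ovr e ω) i u := by
  funext j
  rcases eq_or_ne j i with rfl | hne
  · simp [ovr, hei]
  · simp [ovr, Function.update_of_ne hne]

lemma measurable_ovr (e : ∀ j, Option (Ω j)) : Measurable (ovr e) := by
  apply measurable_pi_lambda
  intro j
  cases he : e j with
  | some v => simpa [ovr, he] using measurable_const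
  | none => simpa [ovr, he] using measurable_pi_apply j

lemma measurable_hyb_comp (S : DTree I Ω ℝ) (d : ∀ j, Ω j) {α : Type*}
    [MeasurableSpace α] {g : α → ∀ j, Ω j} (hg : Measurable g) :
    Measurable fun a => hyb S (g a) d := by
  induction S generalizing g with
  | leaf a => simpa [hyb] using hg
  | node i c ih =>
    simp only [hyb]
    exact ih (d i) (measurable_update_left.comp hg)

variable (μ : ∀ i, Measure (Ω i)) [∀ i, IsProbabilityMeasure (μ i)]

lemma map_update_pi (i : I) :
    Measure.map (fun p : (∀ j, Ω j) × Ω i => Function.update p.1 i p.2)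
      ((Measure.pi μ).prod (μ i)) = Measure.pi μ := by
  symm
  apply Measure.pi_eq
  intro s hs
  rw [Measure.map_apply measurable_update' (MeasurableSet.univ_pi hs)]
  have hpre : (fun p : (∀ j, Ω j) × Ω i => Function.update p.1 i p.2) ⁻¹'
      (Set.pi Set.univ s) =
      (Set.pi Set.univ (Function.update s i Set.univ)) ×ˢ (s i) := by
    ext ⟨a, y⟩
    simp only [Set.mem_preimage, Set.mem_pi, Set.mem_univ, forall_true_left,
      Set.mem_prod]
    constructor
    · intro h
      refine ⟨fun j => ?_, by simpa using h i⟩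
      rcases eq_or_ne j i with rfl | hne
      · simp
      · simpa [Function.update_of_ne hne] using h j
    · rintro ⟨h1, h2⟩ j
      rcases eq_or_ne j i with rfl | hne
      · simpa using h2
      · simpa [Function.update_of_ne hne] using h1 j
  rw [hpre, Measure.prod_prod, Measure.pi_pi]
  have : ∀ j, (μ j) (Function.update s i Set.univ j) =
      Function.update (fun j => (μ j) (s j)) i 1 j := by
    intro j
    rcases eq_or_ne j i with rfl | hne
    · simp
    · simp [Function.update_of_ne hne]
  rw [Finset.prod_congr rfl fun j _ => this j]
  rw [Finset.prod_update_of_mem (Finset.mem_univ i)]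
  rw [← Finset.mul_prod_erase Finset.univ _ (Finset.mem_univ i),
    Finset.sdiff_singleton_eq_erase]
  ring

lemma integrable_bdd {α : Type*} [MeasurableSpace α] (ν : Measure α)
    [IsFiniteMeasure ν] {g : α → ℝ} (hg : AEStronglyMeasurable g ν) (C : ℝ)
    (h : ∀ a, |g a| ≤ C) : Integrable g ν :=
  Integrable.mono' (integrable_const C) hg (Filter.Eventually.of_forall fun a => by
    simpa [Real.norm_eq_abs] using h a)


lemma abs_integral_le {α : Type*} [MeasurableSpace α] (ν : Measure α)
    [IsProbabilityMeasure ν] {g : α → ℝ} {C : ℝ} (h : ∀ a, |g a| ≤ C) :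
    |∫ a, g a ∂ν| ≤ C := by
  have h2 := norm_integral_le_of_norm_le_const (μ := ν) (f := g) (C := C)
    (Filter.Eventually.of_forall fun a => by rw [Real.norm_eq_abs]; exact h a)
  simpa [Real.norm_eq_abs, measure_univ] using h2

/-- Resampling coordinate `i`: outer over the product, inner over `μ i`. -/
lemma integral_update_left (i : I) {g : (∀ j, Ω j) → ℝ} (hg : Measurable g)
    (C : ℝ) (hb : ∀ ω, |g ω| ≤ C) :
    ∫ ω, g ω ∂(Measure.pi μ) =
      ∫ ω, ∫ x, g (Function.update ω i x) ∂(μ i) ∂(Measure.pi μ) := by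
  have h0 : ∫ ω, g ω ∂(Measure.pi μ) =
      ∫ p, g (Function.update p.1 i p.2) ∂((Measure.pi μ).prod (μ i)) := by
    conv_lhs => rw [← map_update_pi (μ := μ) i]
    exact integral_map measurable_update'.aemeasurable hg.aestronglyMeasurable
  have hint : Integrable
      (fun p : (∀ j, Ω j) × Ω i => g (Function.update p.1 i p.2))
      ((Measure.pi μ).prod (μ i)) :=
    integrable_bdd ((Measure.pi μ).prod (μ i))
      ((hg.comp measurable_update').aestronglyMeasurable) C fun p => hb _
  rw [h0, MeasureTheory.integral_prod _ hint]

lemma integral_update_right (i : I) {g : (∀ j, Ω j) → ℝ} (hg : Measurable g)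
    (C : ℝ) (hb : ∀ ω, |g ω| ≤ C) :
    ∫ ω, g ω ∂(Measure.pi μ) =
      ∫ x, ∫ ω, g (Function.update ω i x) ∂(Measure.pi μ) ∂(μ i) := by
  have h0 : ∫ ω, g ω ∂(Measure.pi μ) =
      ∫ p, g (Function.update p.1 i p.2) ∂((Measure.pi μ).prod (μ i)) := by
    conv_lhs => rw [← map_update_pi (μ := μ) i]
    exact integral_map measurable_update'.aemeasurable hg.aestronglyMeasurable
  have hint : Integrable
      (fun p : (∀ j, Ω j) × Ω i => g (Function.update p.1 i p.2))
      ((Measure.pi μ).prod (μ i)) :=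
    integrable_bdd ((Measure.pi μ).prod (μ i))
      ((hg.comp measurable_update').aestronglyMeasurable) C fun p => hb _
  rw [h0, MeasureTheory.integral_prod_symm _ hint]

lemma integral_marginal (i : I) {G : Ω i → ℝ} (hG : Measurable G) (C : ℝ)
    (hb : ∀ x, |G x| ≤ C) :
    ∫ ω, G (ω i) ∂(Measure.pi μ) = ∫ x, G x ∂(μ i) := by
  have h1 := integral_update_right μ i (g := fun ω => G (ω i))
    (hG.comp (measurable_pi_apply i)) C fun ω => hb _
  rw [h1]
  have h2 : ∀ x : Ω i, ∫ ω, G (Function.update ω i x i) ∂(Measure.pi μ) = G x := by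
    intro x
    simp only [Function.update_self]
    simp
  rw [integral_congr_ae (Filter.Eventually.of_forall h2)]

lemma measurable_slice_measure (i : I) {C : Set (∀ j, Ω j)} (hC : MeasurableSet C) :
    Measurable fun x : Ω i =>
      (Measure.pi μ) ((fun d => Function.update d i x) ⁻¹' C) := by
  have key : ∀ x : Ω i, (Measure.pi μ) ((fun d => Function.update d i x) ⁻¹' C) =
      ∫⁻ d, C.indicator 1 (Function.update d i x) ∂(Measure.pi μ) := by
    intro x
    rw [← lintegral_indicator_one (measurable_update_left hC)]
    exact lintegral_congr fun d => rfl
  simp only [key]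
  exact Measurable.lintegral_prod_right'
    (f := fun p : Ω i × (∀ j, Ω j) =>
      C.indicator (1 : (∀ j, Ω j) → ℝ≥0∞) (Function.update p.2 i p.1))
    ((measurable_const.indicator hC).comp
      (measurable_update'.comp (measurable_snd.prodMk measurable_fst)))

lemma lintegral_slice (i : I) {C : Set (∀ j, Ω j)} (hC : MeasurableSet C) :
    ∫⁻ x, (Measure.pi μ) ((fun d => Function.update d i x) ⁻¹' C) ∂(μ i) =
      (Measure.pi μ) C := by
  have hmeas : Measurable fun p : (∀ j, Ω j) × Ω i =>
      C.indicator (1 : (∀ j, Ω j) → ℝ≥0∞) (Function.update p.1 i p.2) :=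
    (measurable_const.indicator hC).comp measurable_update'
  have h1 : (Measure.pi μ) C =
      ∫⁻ p : (∀ j, Ω j) × Ω i, C.indicator 1 (Function.update p.1 i p.2)
        ∂((Measure.pi μ).prod (μ i)) := by
    conv_lhs => rw [← map_update_pi (μ := μ) i]
    rw [Measure.map_apply measurable_update' hC,
      ← lintegral_indicator_one (measurable_update' hC)]
    exact lintegral_congr fun p => rfl
  rw [h1, MeasureTheory.lintegral_prod_symm _ hmeas.aemeasurable]
  refine lintegral_congr fun x => ?_
  rw [← lintegral_indicator_one (measurable_update_left hC)]
  exact lintegral_congr fun d => rfl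

lemma integral_toReal_slice (i : I) {C : Set (∀ j, Ω j)} (hC : MeasurableSet C) :
    ∫ x, ((Measure.pi μ) ((fun d => Function.update d i x) ⁻¹' C)).toReal ∂(μ i) =
      ((Measure.pi μ) C).toReal := by
  rw [integral_toReal ((measurable_slice_measure μ i hC).aemeasurable)
    (Filter.Eventually.of_forall fun x => measure_lt_top _ _)]
  rw [lintegral_slice μ i hC]

end OSSSAux

namespace OSSSAux

lemma abs_sub_le_one_of_Icc {a b : ℝ} (ha : a ∈ Set.Icc (0:ℝ) 1)
    (hb : b ∈ Set.Icc (0:ℝ) 1) : |a - b| ≤ 1 := by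
  rw [abs_sub_le_iff]
  constructor <;> [skip; skip] <;>
    (obtain ⟨h1, h2⟩ := ha; obtain ⟨h3, h4⟩ := hb; linarith)

/-- The single–coordinate covariance bound:
`Cov(F, ψ) ≤ ∫∫ 1[ψ u ≠ ψ v]` for `[0,1]`-valued `F, ψ`. -/
lemma cov_le {β : Type*} [MeasurableSpace β] (ν : Measure β)
    [IsProbabilityMeasure ν] (F ψ : β → ℝ) (hF : Measurable F)
    (hψ : Measurable ψ) (hF01 : ∀ b, F b ∈ Set.Icc (0:ℝ) 1)
    (hψ01 : ∀ b, ψ b ∈ Set.Icc (0:ℝ) 1) (m : ℝ) :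
    ∫ v, ∫ u, (F u - F v) * (ψ u - m) ∂ν ∂ν ≤
      ∫ v, ∫ u, (if ψ u = ψ v then (0:ℝ) else 1) ∂ν ∂ν := by
  have hFb : ∀ b, |F b| ≤ 1 := fun b => by
    rw [abs_le]; exact ⟨by linarith [(hF01 b).1], (hF01 b).2⟩
  have hψb : ∀ b, |ψ b| ≤ 1 := fun b => by
    rw [abs_le]; exact ⟨by linarith [(hψ01 b).1], (hψ01 b).2⟩
  have intF : Integrable F ν := integrable_bdd ν hF.aestronglyMeasurable 1 hFb
  have intψ : Integrable ψ ν := integrable_bdd ν hψ.aestronglyMeasurable 1 hψb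
  have intFψ : Integrable (fun u => F u * ψ u) ν :=
    integrable_bdd ν (hF.mul hψ).aestronglyMeasurable 1 fun u => by
      rw [abs_mul]
      exact mul_le_one₀ (hFb u) (abs_nonneg _) (hψb u)
  set IF := ∫ u, F u ∂ν with hIF
  set Iψ := ∫ u, ψ u ∂ν with hIψ
  set IFψ := ∫ u, F u * ψ u ∂ν with hIFψ
  have inner1 : ∀ v, ∫ u, (F u - F v) * (ψ u - m) ∂ν =
      IFψ - m * IF - F v * Iψ + m * F v := by
    intro v
    have e1 : (fun u => (F u - F v) * (ψ u - m)) =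
        fun u => (F u * ψ u - m * F u - F v * ψ u) + m * F v :=
      funext fun u => by ring
    have i2 : Integrable (fun u => m * F u) ν := by exact intF.const_mul m
    have i3 : Integrable (fun u => F v * ψ u) ν := by exact intψ.const_mul (F v)
    have i4 : Integrable (fun u => F u * ψ u - m * F u) ν := by exact intFψ.sub i2
    have i5 : Integrable (fun u => F u * ψ u - m * F u - F v * ψ u) ν := by
      exact i4.sub i3
    rw [e1, integral_add i5 (integrable_const _), integral_sub i4 i3,
      integral_sub intFψ i2, integral_const_mul, integral_const_mul,
      integral_const]
    simp
    rfl
  have inner2 : ∀ v, ∫ u, (F u - F v) * (ψ u - ψ v) ∂ν =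
      IFψ - ψ v * IF - F v * Iψ + F v * ψ v := by
    intro v
    have e1 : (fun u => (F u - F v) * (ψ u - ψ v)) =
        fun u => (F u * ψ u - ψ v * F u - F v * ψ u) + F v * ψ v :=
      funext fun u => by ring
    have i2 : Integrable (fun u => ψ v * F u) ν := by exact intF.const_mul (ψ v)
    have i3 : Integrable (fun u => F v * ψ u) ν := by exact intψ.const_mul (F v)
    have i4 : Integrable (fun u => F u * ψ u - ψ v * F u) ν := by exact intFψ.sub i2
    have i5 : Integrable (fun u => F u * ψ u - ψ v * F u - F v * ψ u) ν := by
      exact i4.sub i3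
    rw [e1, integral_add i5 (integrable_const _), integral_sub i4 i3,
      integral_sub intFψ i2, integral_const_mul, integral_const_mul,
      integral_const]
    simp
    rfl
  have outer1 : ∫ v, ∫ u, (F u - F v) * (ψ u - m) ∂ν ∂ν = IFψ - IF * Iψ := by
    rw [show (fun v => ∫ u, (F u - F v) * (ψ u - m) ∂ν) =
        fun v => (IFψ - m * IF) + F v * (m - Iψ) from
      funext fun v => by rw [inner1 v]; ring]
    have i1 : Integrable (fun v => F v * (m - Iψ)) ν := by exact intF.mul_const _
    rw [integral_add (integrable_const _) i1, integral_const, integral_mul_const]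
    simp
    ring
  have outer2 : ∫ v, ∫ u, (F u - F v) * (ψ u - ψ v) ∂ν ∂ν =
      2 * (IFψ - IF * Iψ) := by
    rw [show (fun v => ∫ u, (F u - F v) * (ψ u - ψ v) ∂ν) =
        fun v => (F v * ψ v - ψ v * IF - F v * Iψ) + IFψ from
      funext fun v => by rw [inner2 v]; ring]
    have i2 : Integrable (fun v => ψ v * IF) ν := by exact intψ.mul_const IF
    have i3 : Integrable (fun v => F v * Iψ) ν := by exact intF.mul_const Iψ
    have i4 : Integrable (fun v => F v * ψ v - ψ v * IF) ν := by exact intFψ.sub i2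
    have i5 : Integrable (fun v => F v * ψ v - ψ v * IF - F v * Iψ) ν := by
      exact i4.sub i3
    rw [integral_add i5 (integrable_const _), integral_sub i4 i3,
      integral_sub intFψ i2, integral_mul_const, integral_mul_const,
      integral_const]
    simp
    ring
  -- pointwise comparison with the indicator
  have hptwise : ∀ v u, (F u - F v) * (ψ u - ψ v) ≤
      (if ψ u = ψ v then (0:ℝ) else 1) := by
    intro v u
    by_cases h : ψ u = ψ v
    · simp [h]
    · simp only [h, if_false]
      calc (F u - F v) * (ψ u - ψ v) ≤ |(F u - F v) * (ψ u - ψ v)| := le_abs_self _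
        _ = |F u - F v| * |ψ u - ψ v| := abs_mul _ _
        _ ≤ 1 * 1 := mul_le_mul (abs_sub_le_one_of_Icc (hF01 u) (hF01 v))
            (abs_sub_le_one_of_Icc (hψ01 u) (hψ01 v)) (abs_nonneg _) zero_le_one
        _ = 1 := one_mul 1
  have hsetmeas : MeasurableSet {p : β × β | ψ p.1 = ψ p.2} :=
    measurableSet_eq_fun (hψ.comp measurable_fst) (hψ.comp measurable_snd)
  have hindmeas : Measurable fun p : β × β => (if ψ p.1 = ψ p.2 then (0:ℝ) else 1) := by
    exact Measurable.ite hsetmeas measurable_const measurable_const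
  have hindb : ∀ v u : β, |if ψ u = ψ v then (0:ℝ) else 1| ≤ 1 := by
    intro v u; by_cases h : ψ u = ψ v <;> simp [h]
  have hindint : ∀ v, Integrable (fun u => (if ψ u = ψ v then (0:ℝ) else 1)) ν := by
    intro v
    exact integrable_bdd ν (Measurable.ite (hψ (measurableSet_singleton (ψ v)))
      measurable_const measurable_const).aestronglyMeasurable 1 (hindb v)
  have hmono : ∫ v, ∫ u, (F u - F v) * (ψ u - ψ v) ∂ν ∂ν ≤
      ∫ v, ∫ u, (if ψ u = ψ v then (0:ℝ) else 1) ∂ν ∂ν := by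
    apply integral_mono
    · refine integrable_bdd ν ?_ 4 fun v => ?_
      · rw [show (fun v => ∫ u, (F u - F v) * (ψ u - ψ v) ∂ν) =
            fun v => (IFψ - ψ v * IF - F v * Iψ) + F v * ψ v from
          funext fun v => by rw [inner2 v]]
        exact (((measurable_const.sub (hψ.mul measurable_const)).sub
          (hF.mul measurable_const)).add (hF.mul hψ)).aestronglyMeasurable
      · rw [inner2 v]
        have h1 : |IFψ| ≤ 1 := abs_integral_le ν fun u => by
          rw [abs_mul]; exact mul_le_one₀ (hFb u) (abs_nonneg _) (hψb u)
        have h2 : |IF| ≤ 1 := abs_integral_le ν hFb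
        have h3 : |Iψ| ≤ 1 := abs_integral_le ν hψb
        have h4 : |ψ v * IF| ≤ 1 := by
          rw [abs_mul]; exact mul_le_one₀ (hψb v) (abs_nonneg _) h2
        have h5 : |F v * Iψ| ≤ 1 := by
          rw [abs_mul]; exact mul_le_one₀ (hFb v) (abs_nonneg _) h3
        have h6 : |F v * ψ v| ≤ 1 := by
          rw [abs_mul]; exact mul_le_one₀ (hFb v) (abs_nonneg _) (hψb v)
        calc |IFψ - ψ v * IF - F v * Iψ + F v * ψ v| ≤
            |IFψ - ψ v * IF - F v * Iψ| + |F v * ψ v| := abs_add_le _ _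
          _ ≤ (|IFψ - ψ v * IF| + |F v * Iψ|) + |F v * ψ v| := by
              gcongr; exact abs_sub _ _
          _ ≤ ((|IFψ| + |ψ v * IF|) + |F v * Iψ|) + |F v * ψ v| := by
              gcongr; exact abs_sub _ _
          _ ≤ ((1 + 1) + 1) + 1 := by gcongr
          _ = 4 := by norm_num
    · refine integrable_bdd ν ?_ 1 fun v => ?_
      · exact (StronglyMeasurable.integral_prod_right'
          (f := fun p : β × β => (if ψ p.2 = ψ p.1 then (0:ℝ) else 1))
          ((Measurable.ite (measurableSet_eq_fun (hψ.comp measurable_snd)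
            (hψ.comp measurable_fst)) measurable_const
            measurable_const).stronglyMeasurable)).measurable.aestronglyMeasurable
      · exact abs_integral_le ν (hindb v)
    · intro v
      apply integral_mono ?_ (hindint v) (hptwise v)
      refine integrable_bdd ν ((( hF.sub measurable_const).mul
        (hψ.sub measurable_const)).aestronglyMeasurable) 1 fun u => by
          rw [abs_mul]
          exact mul_le_one₀ (abs_sub_le_one_of_Icc (hF01 u) (hF01 v)) (abs_nonneg _)
            (abs_sub_le_one_of_Icc (hψ01 u) (hψ01 v))
  have hRHS0 : (0:ℝ) ≤ ∫ v, ∫ u, (if ψ u = ψ v then (0:ℝ) else 1) ∂ν ∂ν := by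
    apply integral_nonneg
    intro v
    simp only [Pi.zero_apply]
    apply integral_nonneg
    intro u
    simp only [Pi.zero_apply]
    split <;> norm_num
  rw [outer1]
  rw [outer2] at hmono
  linarith

end OSSSAux

namespace OSSSAux

variable {I : Type*} [Fintype I] [DecidableEq I] {Ω : I → Type*}
  [∀ i, MeasurableSpace (Ω i)]
  (μ : ∀ i, Measure (Ω i)) [∀ i, IsProbabilityMeasure (μ i)]
  (f : (∀ j, Ω j) → ℝ)

/-- The mean of `f`. -/
noncomputable def mq : ℝ := ∫ ω, f ω ∂(Measure.pi μ)

/-- The core quantity of the OSSS induction. -/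
noncomputable def Vq (S : DTree I Ω ℝ) (e : ∀ j, Option (Ω j)) (d : ∀ j, Ω j) : ℝ :=
  ∫ ω, (f (ovr e ω) - f (hyb S (ovr e ω) d)) * (f ω - mq μ f) ∂(Measure.pi μ)

/-- The single-step term of the OSSS induction. -/
noncomputable def Dq (e : ∀ j, Option (Ω j)) (i : I) (v : Ω i) : ℝ :=
  ∫ ω, (f (ovr e ω) - f (Function.update (ovr e ω) i v)) * (f ω - mq μ f)
    ∂(Measure.pi μ)

variable (hf : Measurable f) (hf01 : ∀ ω, f ω ∈ Set.Icc (0:ℝ) 1)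
include hf hf01

lemma f_abs_le : ∀ ω, |f ω| ≤ 1 := fun ω => by
  rw [abs_le]; exact ⟨by linarith [(hf01 ω).1], (hf01 ω).2⟩

lemma intf : Integrable f (Measure.pi μ) :=
  integrable_bdd _ hf.aestronglyMeasurable 1 (f_abs_le f hf hf01)

lemma mq_mem : mq μ f ∈ Set.Icc (0:ℝ) 1 := by
  constructor
  · exact integral_nonneg fun ω => (hf01 ω).1
  · calc mq μ f ≤ ∫ _ω, (1:ℝ) ∂(Measure.pi μ) :=
        integral_mono (intf μ f hf hf01) (integrable_const 1) fun ω => (hf01 ω).2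
      _ = 1 := by simp

/-- The master pointwise bound. -/
lemma prod_bnd {a b c : ℝ} (ha : a ∈ Set.Icc (0:ℝ) 1) (hb : b ∈ Set.Icc (0:ℝ) 1)
    (hc : c ∈ Set.Icc (0:ℝ) 1) : |(a - b) * (c - mq μ f)| ≤ 1 := by
  rw [abs_mul]
  exact mul_le_one₀ (abs_sub_le_one_of_Icc ha hb) (abs_nonneg _)
    (abs_sub_le_one_of_Icc hc (mq_mem μ f hf hf01))

lemma measurable_Vq_integrand (S : DTree I Ω ℝ) (e : ∀ j, Option (Ω j))
    (d : ∀ j, Ω j) :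
    Measurable fun ω => (f (ovr e ω) - f (hyb S (ovr e ω) d)) * (f ω - mq μ f) :=
  ((hf.comp (measurable_ovr e)).sub
    (hf.comp (measurable_hyb_comp S d (measurable_ovr e)))).mul
    (hf.sub measurable_const)

lemma abs_Vq_le (S : DTree I Ω ℝ) (e : ∀ j, Option (Ω j)) (d : ∀ j, Ω j) :
    |Vq μ f S e d| ≤ 1 :=
  abs_integral_le _ fun ω => prod_bnd μ f hf hf01 (hf01 _) (hf01 _) (hf01 _)

lemma abs_Dq_le (e : ∀ j, Option (Ω j)) (i : I) (v : Ω i) :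
    |Dq μ f e i v| ≤ 1 :=
  abs_integral_le _ fun ω => prod_bnd μ f hf hf01 (hf01 _) (hf01 _) (hf01 _)

lemma measurable_Dq (e : ∀ j, Option (Ω j)) (i : I) :
    Measurable (Dq μ f e i) := by
  have hj : Measurable fun p : Ω i × (∀ j, Ω j) =>
      (f (ovr e p.2) - f (Function.update (ovr e p.2) i p.1)) * (f p.2 - mq μ f) := by
    have a0 : Measurable fun p : Ω i × (∀ j, Ω j) => ovr e p.2 :=
      (measurable_ovr e).comp measurable_snd
    exact ((hf.comp a0).sub
      (hf.comp (measurable_update'.comp (a0.prodMk measurable_fst)))).mul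
      ((hf.comp measurable_snd).sub measurable_const)
  exact (StronglyMeasurable.integral_prod_right' hj.stronglyMeasurable).measurable

lemma Vq_node (i : I) (c : Ω i → DTree I Ω ℝ) (e : ∀ j, Option (Ω j))
    (d : ∀ j, Ω j) :
    Vq μ f (.node i c) e d = Dq μ f e i (d i) +
      Vq μ f (c (d i)) (Function.update e i (some (d i))) d := by
  unfold Vq Dq
  have key : ∀ ω, (f (ovr e ω) - f (hyb (.node i c) (ovr e ω) d)) * (f ω - mq μ f)
      = (f (ovr e ω) - f (Function.update (ovr e ω) i (d i))) * (f ω - mq μ f)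
      + (f (ovr (Function.update e i (some (d i))) ω) -
          f (hyb (c (d i)) (ovr (Function.update e i (some (d i))) ω) d)) *
          (f ω - mq μ f) := by
    intro ω
    rw [ovr_update]
    show (f (ovr e ω) - f (hyb (c (d i)) (Function.update (ovr e ω) i (d i)) d))
        * (f ω - mq μ f) = _
    ring
  rw [integral_congr_ae (Filter.Eventually.of_forall key)]
  rw [integral_add]
  · exact integrable_bdd _ (((hf.comp (measurable_ovr e)).sub
      (hf.comp (measurable_update_left.comp (measurable_ovr e)))).mul
      (hf.sub measurable_const)).aestronglyMeasurable 1
      fun ω => prod_bnd μ f hf hf01 (hf01 _) (hf01 _) (hf01 _)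
  · exact integrable_bdd _
      (measurable_Vq_integrand μ f hf hf01 (c (d i)) (Function.update e i (some (d i))) d).aestronglyMeasurable
      1 fun ω => prod_bnd μ f hf hf01 (hf01 _) (hf01 _) (hf01 _)

lemma Vq_leaf (a : ℝ) (e : ∀ j, Option (Ω j)) (d : ∀ j, Ω j) :
    Vq μ f (.leaf a) e d = 0 := by
  unfold Vq
  have : ∀ ω, (f (ovr e ω) - f (hyb (.leaf a) (ovr e ω) d)) * (f ω - mq μ f) = 0 := by
    intro ω
    show (f (ovr e ω) - f (ovr e ω)) * (f ω - mq μ f) = 0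
    ring
  rw [integral_congr_ae (Filter.Eventually.of_forall this)]
  simp

lemma Vq_driver {S : DTree I Ω ℝ} {R : Set I} (hA : Avoids S R) {r : I}
    (hr : r ∈ R) (e : ∀ j, Option (Ω j)) (d : ∀ j, Ω j) (x : Ω r) :
    Vq μ f S e (Function.update d r x) = Vq μ f S e d := by
  unfold Vq
  exact integral_congr_ae (Filter.Eventually.of_forall fun ω => by
    dsimp only
    rw [hyb_update_driver hA hr])

end OSSSAux

namespace OSSSAux

variable {I : Type*} [Fintype I] [DecidableEq I] {Ω : I → Type*}
  [∀ i, MeasurableSpace (Ω i)]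
  (μ : ∀ i, Measure (Ω i)) [∀ i, IsProbabilityMeasure (μ i)]
  (f : (∀ j, Ω j) → ℝ)
variable (hf : Measurable f) (hf01 : ∀ ω, f ω ∈ Set.Icc (0:ℝ) 1)
include hf hf01

/-- The key covariance estimate: the expected one-step term is bounded by the
influence of the coordinate `i`. -/
lemma integral_Dq_le (e : ∀ j, Option (Ω j)) (i : I) (hei : e i = none) :
    ∫ d, Dq μ f e i (d i) ∂(Measure.pi μ) ≤
      (((Measure.pi μ).prod (μ i))
        {q | f q.1 ≠ f (Function.update q.1 i q.2)}).toReal := by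
  have a0 : Measurable (ovr e (Ω := Ω)) := measurable_ovr e
  -- the inner-step integrand, bounds and measurability (in two tuple shapes)
  have hEb : ∀ (ω : ∀ j, Ω j) (u v : Ω i),
      |(f (Function.update (ovr e ω) i u) - f (Function.update (ovr e ω) i v)) *
        (f (Function.update ω i u) - mq μ f)| ≤ 1 :=
    fun ω u v => prod_bnd μ f hf hf01 (hf01 _) (hf01 _) (hf01 _)
  have hindb : ∀ (ω : ∀ j, Ω j) (u v : Ω i),
      |(if f (Function.update ω i u) = f (Function.update ω i v) then (0:ℝ) else 1)|
        ≤ 1 := by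
    intro ω u v
    by_cases h : f (Function.update ω i u) = f (Function.update ω i v) <;> simp [h]
  have hEm1 : Measurable fun q : (Ω i × (∀ j, Ω j)) × Ω i =>
      (f (Function.update (ovr e q.1.2) i q.2) -
        f (Function.update (ovr e q.1.2) i q.1.1)) *
        (f (Function.update q.1.2 i q.2) - mq μ f) := by
    have cω : Measurable fun q : (Ω i × (∀ j, Ω j)) × Ω i => q.1.2 :=
      measurable_snd.comp measurable_fst
    have cv : Measurable fun q : (Ω i × (∀ j, Ω j)) × Ω i => q.1.1 :=
      measurable_fst.comp measurable_fst
    have cu : Measurable fun q : (Ω i × (∀ j, Ω j)) × Ω i => q.2 := measurable_snd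
    exact ((hf.comp (measurable_update'.comp ((a0.comp cω).prodMk cu))).sub
      (hf.comp (measurable_update'.comp ((a0.comp cω).prodMk cv)))).mul
      ((hf.comp (measurable_update'.comp (cω.prodMk cu))).sub measurable_const)
  have hEm2 : Measurable fun q : ((∀ j, Ω j) × Ω i) × Ω i =>
      (f (Function.update (ovr e q.1.1) i q.2) -
        f (Function.update (ovr e q.1.1) i q.1.2)) *
        (f (Function.update q.1.1 i q.2) - mq μ f) := by
    have cω : Measurable fun q : ((∀ j, Ω j) × Ω i) × Ω i => q.1.1 :=
      measurable_fst.comp measurable_fst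
    have cv : Measurable fun q : ((∀ j, Ω j) × Ω i) × Ω i => q.1.2 :=
      measurable_snd.comp measurable_fst
    have cu : Measurable fun q : ((∀ j, Ω j) × Ω i) × Ω i => q.2 := measurable_snd
    exact ((hf.comp (measurable_update'.comp ((a0.comp cω).prodMk cu))).sub
      (hf.comp (measurable_update'.comp ((a0.comp cω).prodMk cv)))).mul
      ((hf.comp (measurable_update'.comp (cω.prodMk cu))).sub measurable_const)
  have hindm2 : Measurable fun q : ((∀ j, Ω j) × Ω i) × Ω i =>
      (if f (Function.update q.1.1 i q.2) = f (Function.update q.1.1 i q.1.2)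
        then (0:ℝ) else 1) := by
    have cω : Measurable fun q : ((∀ j, Ω j) × Ω i) × Ω i => q.1.1 :=
      measurable_fst.comp measurable_fst
    have cv : Measurable fun q : ((∀ j, Ω j) × Ω i) × Ω i => q.1.2 :=
      measurable_snd.comp measurable_fst
    have cu : Measurable fun q : ((∀ j, Ω j) × Ω i) × Ω i => q.2 := measurable_snd
    exact Measurable.ite (measurableSet_eq_fun
      (hf.comp (measurable_update'.comp (cω.prodMk cu)))
      (hf.comp (measurable_update'.comp (cω.prodMk cv))))
      measurable_const measurable_const
  -- Step A : marginalize the first coordinate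
  have hA : ∫ d, Dq μ f e i (d i) ∂(Measure.pi μ) = ∫ v, Dq μ f e i v ∂(μ i) :=
    integral_marginal μ i (measurable_Dq μ f hf hf01 e i) 1
      (abs_Dq_le μ f hf hf01 e i)
  -- Step B : resample the coordinate i inside Dq
  have hBv : ∀ v, Dq μ f e i v = ∫ ω, ∫ u,
      (f (Function.update (ovr e ω) i u) - f (Function.update (ovr e ω) i v)) *
        (f (Function.update ω i u) - mq μ f) ∂(μ i) ∂(Measure.pi μ) := by
    intro v
    have hg : Measurable fun ω =>
        (f (ovr e ω) - f (Function.update (ovr e ω) i v)) * (f ω - mq μ f) :=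
      ((hf.comp a0).sub (hf.comp (measurable_update_left.comp a0))).mul
        (hf.sub measurable_const)
    unfold Dq
    rw [integral_update_left μ i hg 1
      (fun ω => prod_bnd μ f hf hf01 (hf01 _) (hf01 _) (hf01 _))]
    refine integral_congr_ae (Filter.Eventually.of_forall fun ω => ?_)
    refine integral_congr_ae (Filter.Eventually.of_forall fun u => ?_)
    dsimp only
    rw [ovr_update_arg hei, Function.update_idem]
  -- integrability for the two swaps
  have hswap1 : Integrable (Function.uncurry fun (v : Ω i) (ω : ∀ j, Ω j) => ∫ u,
      (f (Function.update (ovr e ω) i u) - f (Function.update (ovr e ω) i v)) *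
        (f (Function.update ω i u) - mq μ f) ∂(μ i)) ((μ i).prod (Measure.pi μ)) := by
    refine integrable_bdd _ ((StronglyMeasurable.integral_prod_right'
      hEm1.stronglyMeasurable).measurable).aestronglyMeasurable 1 fun p => ?_
    exact abs_integral_le _ fun u => hEb p.2 u p.1
  have hswap2 : Integrable (Function.uncurry fun (ω : ∀ j, Ω j) (v : Ω i) => ∫ u,
      (if f (Function.update ω i u) = f (Function.update ω i v) then (0:ℝ) else 1)
        ∂(μ i)) ((Measure.pi μ).prod (μ i)) := by
    refine integrable_bdd _ ((StronglyMeasurable.integral_prod_right'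
      hindm2.stronglyMeasurable).measurable).aestronglyMeasurable 1 fun p => ?_
    exact abs_integral_le _ fun u => hindb p.1 u p.2
  -- integrability for the ω-monotonicity step
  have hint1 : Integrable (fun ω : ∀ j, Ω j => ∫ v, ∫ u,
      (f (Function.update (ovr e ω) i u) - f (Function.update (ovr e ω) i v)) *
        (f (Function.update ω i u) - mq μ f) ∂(μ i) ∂(μ i)) (Measure.pi μ) := by
    refine integrable_bdd _ ((StronglyMeasurable.integral_prod_right'
      (StronglyMeasurable.integral_prod_right'
        hEm2.stronglyMeasurable)).measurable).aestronglyMeasurable 1 fun ω => ?_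
    refine abs_integral_le _ fun v => ?_
    exact abs_integral_le _ fun u => hEb ω u v
  have hint2 : Integrable (fun ω : ∀ j, Ω j => ∫ v, ∫ u,
      (if f (Function.update ω i u) = f (Function.update ω i v) then (0:ℝ) else 1)
        ∂(μ i) ∂(μ i)) (Measure.pi μ) := by
    refine integrable_bdd _ ((StronglyMeasurable.integral_prod_right'
      (StronglyMeasurable.integral_prod_right'
        hindm2.stronglyMeasurable)).measurable).aestronglyMeasurable 1 fun ω => ?_
    refine abs_integral_le _ fun v => ?_
    exact abs_integral_le _ fun u => hindb ω u v
  -- the pointwise covariance bound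
  have hDptw : ∀ ω : ∀ j, Ω j, ∫ v, ∫ u,
      (f (Function.update (ovr e ω) i u) - f (Function.update (ovr e ω) i v)) *
        (f (Function.update ω i u) - mq μ f) ∂(μ i) ∂(μ i) ≤ ∫ v, ∫ u,
      (if f (Function.update ω i u) = f (Function.update ω i v) then (0:ℝ) else 1)
        ∂(μ i) ∂(μ i) := by
    intro ω
    exact cov_le (μ i) (fun x => f (Function.update (ovr e ω) i x))
      (fun x => f (Function.update ω i x))
      (hf.comp (measurable_update _))
      (hf.comp (measurable_update _))
      (fun x => hf01 _) (fun x => hf01 _) (mq μ f)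
  -- Step G : un-resample for the indicator
  have hGv : ∀ v : Ω i, ∫ ω, ∫ u,
      (if f (Function.update ω i u) = f (Function.update ω i v) then (0:ℝ) else 1)
        ∂(μ i) ∂(Measure.pi μ) =
      ∫ ω, (if f ω = f (Function.update ω i v) then (0:ℝ) else 1) ∂(Measure.pi μ) := by
    intro v
    have hgvm : Measurable fun ω =>
        (if f ω = f (Function.update ω i v) then (0:ℝ) else 1) :=
      Measurable.ite (measurableSet_eq_fun hf (hf.comp measurable_update_left))
        measurable_const measurable_const
    have hgvb : ∀ ω, |(if f ω = f (Function.update ω i v) then (0:ℝ) else 1)| ≤ 1 := by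
      intro ω; by_cases h : f ω = f (Function.update ω i v) <;> simp [h]
    rw [integral_update_left μ i hgvm 1 hgvb]
    refine integral_congr_ae (Filter.Eventually.of_forall fun ω => ?_)
    refine integral_congr_ae (Filter.Eventually.of_forall fun u => ?_)
    dsimp only
    rw [Function.update_idem]
  -- Step H : identify the final integral with the influence
  have hSd : MeasurableSet {q : (∀ j, Ω j) × Ω i |
      f q.1 ≠ f (Function.update q.1 i q.2)} := by
    have h1 : MeasurableSet {q : (∀ j, Ω j) × Ω i |
        f q.1 = f (Function.update q.1 i q.2)} :=
      measurableSet_eq_fun (hf.comp measurable_fst) (hf.comp measurable_update')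
    exact h1.compl
  have hjint : Integrable (fun q : (∀ j, Ω j) × Ω i =>
      (if f q.1 = f (Function.update q.1 i q.2) then (0:ℝ) else 1))
      ((Measure.pi μ).prod (μ i)) := by
    refine integrable_bdd _ (Measurable.ite (measurableSet_eq_fun
      (hf.comp measurable_fst) (hf.comp measurable_update')) measurable_const
      measurable_const).aestronglyMeasurable 1 fun q => ?_
    by_cases h : f q.1 = f (Function.update q.1 i q.2) <;> simp [h]
  have hH : ∫ v, ∫ ω, (if f ω = f (Function.update ω i v) then (0:ℝ) else 1)
      ∂(Measure.pi μ) ∂(μ i) =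
      (((Measure.pi μ).prod (μ i))
        {q | f q.1 ≠ f (Function.update q.1 i q.2)}).toReal := by
    rw [← MeasureTheory.integral_prod_symm _ hjint]
    have hind : (fun q : (∀ j, Ω j) × Ω i =>
        (if f q.1 = f (Function.update q.1 i q.2) then (0:ℝ) else 1)) =
        Set.indicator {q : (∀ j, Ω j) × Ω i |
          f q.1 ≠ f (Function.update q.1 i q.2)} (fun _ => 1) := by
      funext q
      by_cases h : f q.1 = f (Function.update q.1 i q.2) <;>
        simp [Set.indicator_apply, h]
    rw [hind, integral_indicator_const (1:ℝ) hSd]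
    simp
    rfl
  calc ∫ d, Dq μ f e i (d i) ∂(Measure.pi μ)
      = ∫ v, Dq μ f e i v ∂(μ i) := hA
    _ = ∫ v, ∫ ω, ∫ u,
        (f (Function.update (ovr e ω) i u) - f (Function.update (ovr e ω) i v)) *
          (f (Function.update ω i u) - mq μ f) ∂(μ i) ∂(Measure.pi μ) ∂(μ i) :=
        integral_congr_ae (Filter.Eventually.of_forall hBv)
    _ = ∫ ω, ∫ v, ∫ u,
        (f (Function.update (ovr e ω) i u) - f (Function.update (ovr e ω) i v)) *
          (f (Function.update ω i u) - mq μ f) ∂(μ i) ∂(μ i) ∂(Measure.pi μ) :=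
        integral_integral_swap hswap1
    _ ≤ ∫ ω, ∫ v, ∫ u,
        (if f (Function.update ω i u) = f (Function.update ω i v) then (0:ℝ) else 1)
          ∂(μ i) ∂(μ i) ∂(Measure.pi μ) := integral_mono hint1 hint2 hDptw
    _ = ∫ v, ∫ ω, ∫ u,
        (if f (Function.update ω i u) = f (Function.update ω i v) then (0:ℝ) else 1)
          ∂(μ i) ∂(Measure.pi μ) ∂(μ i) := integral_integral_swap hswap2
    _ = ∫ v, ∫ ω, (if f ω = f (Function.update ω i v) then (0:ℝ) else 1)
          ∂(Measure.pi μ) ∂(μ i) :=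
        integral_congr_ae (Filter.Eventually.of_forall hGv)
    _ = (((Measure.pi μ).prod (μ i))
          {q | f q.1 ≠ f (Function.update q.1 i q.2)}).toReal := hH

end OSSSAux

namespace OSSSAux

variable {I : Type*} [Fintype I] [DecidableEq I] {Ω : I → Type*}
  [∀ i, MeasurableSpace (Ω i)]
  (μ : ∀ i, Measure (Ω i)) [∀ i, IsProbabilityMeasure (μ i)]
  (f : (∀ j, Ω j) → ℝ)
variable (hf : Measurable f) (hf01 : ∀ ω, f ω ∈ Set.Icc (0:ℝ) 1)
include hf hf01

/-- The main induction: every measurable minorant of `Vq S e` has integral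
bounded by the OSSS sum. -/
lemma main_claim (S : DTree I Ω ℝ) :
    ∀ (e : ∀ j, Option (Ω j)), Avoids S {j | (e j).isSome} →
    ∀ h : (∀ j, Ω j) → ℝ, Measurable h → (∀ d, -1 ≤ h d) →
    (∀ d, h d ≤ Vq μ f S e d) →
    ∫ d, h d ∂(Measure.pi μ) ≤ ∑ j : I,
      ((Measure.pi μ) {d | j ∈ S.revealed d}).toReal *
      (((Measure.pi μ).prod (μ j))
        {q | f q.1 ≠ f (Function.update q.1 j q.2)}).toReal := by
  induction S with
  | leaf a =>
    intro e hAv h hm hlb hub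
    have hub0 : ∀ d, h d ≤ 0 := fun d => (hub d).trans (Vq_leaf μ f hf hf01 a e d).le
    have hint : Integrable h (Measure.pi μ) :=
      integrable_bdd _ hm.aestronglyMeasurable 1 fun d =>
        abs_le.2 ⟨hlb d, (hub0 d).trans zero_le_one⟩
    have h1 : ∫ d, h d ∂(Measure.pi μ) ≤ ∫ _d, (0:ℝ) ∂(Measure.pi μ) :=
      integral_mono hint (integrable_const 0) hub0
    have h2 : (∫ _d, (0:ℝ) ∂(Measure.pi μ)) = 0 := by simp
    rw [h2] at h1
    refine h1.trans (Finset.sum_nonneg fun j _ => ?_)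
    exact mul_nonneg ENNReal.toReal_nonneg ENNReal.toReal_nonneg
  | node i c IH =>
    intro e hAv h hm hlb hub
    obtain ⟨hie, hsub⟩ := hAv
    have hei : e i = none := by
      rcases he : e i with _ | v
      · rfl
      · exact absurd (show i ∈ {j | (e j).isSome = true} by simp [he]) hie
    -- abbreviations
    set π := Measure.pi μ with hπ
    have hKnn : ∀ j : I, (0:ℝ) ≤
        (((Measure.pi μ).prod (μ j))
          {q | f q.1 ≠ f (Function.update q.1 j q.2)}).toReal :=
      fun j => ENNReal.toReal_nonneg
    -- D and its properties
    have hDmeas : Measurable fun d : ∀ j, Ω j => Dq μ f e i (d i) :=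
      (measurable_Dq μ f hf hf01 e i).comp (measurable_pi_apply i)
    have hDb : ∀ d : ∀ j, Ω j, |Dq μ f e i (d i)| ≤ 1 := fun d =>
      abs_Dq_le μ f hf hf01 e i (d i)
    have hDint : Integrable (fun d : ∀ j, Ω j => Dq μ f e i (d i)) π :=
      integrable_bdd _ hDmeas.aestronglyMeasurable 1 hDb
    have hhb : ∀ d, |h d| ≤ 1 := fun d => abs_le.2 ⟨hlb d,
      (hub d).trans (le_of_abs_le (abs_Vq_le μ f hf hf01 _ e d))⟩
    have hhint : Integrable h π := integrable_bdd _ hm.aestronglyMeasurable 1 hhb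
    -- measurable supersets of the revealment events
    have hCex : ∀ j : I, ∃ C : Set (∀ k, Ω k),
        {d | j ∈ (DTree.node i c).revealed d} ⊆ C ∧ MeasurableSet C ∧
        π C = π {d | j ∈ (DTree.node i c).revealed d} :=
      fun j => exists_measurable_superset _ _
    choose C hC1 hC2 hC3 using hCex
    -- environment update facts
    have hAv' : ∀ x : Ω i, Avoids (c x)
        {j | ((Function.update e i (some x)) j).isSome} := by
      intro x
      rw [dom_update]
      exact hsub x
    have hAv'' : ∀ x : Ω i, Avoids (c x) (insert i {j | (e j).isSome}) := hsub
    have hiIns : i ∈ insert i {j | (e j).isSome} := Set.mem_insert _ _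
    -- the branch minorants
    set g : (∀ j, Ω j) → ℝ := fun d => h d - Dq μ f e i (d i) with hg
    have hgmeas : Measurable g := hm.sub hDmeas
    have hgb : ∀ d, |g d| ≤ 2 := fun d => by
      have := abs_sub (h d) (Dq μ f e i (d i))
      calc |g d| ≤ |h d| + |Dq μ f e i (d i)| := abs_sub _ _
        _ ≤ 1 + 1 := add_le_add (hhb d) (hDb d)
        _ = 2 := by norm_num
    have hVnode := Vq_node μ f hf hf01 i c e
    -- pointwise minorant bound along the branch x
    have hgub : ∀ (x : Ω i) (d : ∀ j, Ω j), g (Function.update d i x) ≤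
        Vq μ f (c x) (Function.update e i (some x)) d := by
      intro x d
      have h1 := hub (Function.update d i x)
      rw [hVnode (Function.update d i x)] at h1
      have h2 : Vq μ f (c ((Function.update d i x) i))
          (Function.update e i (some ((Function.update d i x) i)))
          (Function.update d i x) =
          Vq μ f (c x) (Function.update e i (some x)) d := by
        rw [Function.update_self]
        exact Vq_driver μ f hf hf01 (hAv'' x) hiIns _ d x
      rw [h2] at h1
      simp only [hg]
      linarith
    -- the inner integrals over the branch
    have hjointmeas : Measurable fun p : Ω i × (∀ j, Ω j) =>
        g (Function.update p.2 i p.1) :=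
      hgmeas.comp (measurable_update'.comp (measurable_snd.prodMk measurable_fst))
    have hgint : Integrable g π := integrable_bdd _ hgmeas.aestronglyMeasurable 2 hgb
    have hsplit : ∫ d, h d ∂π =
        (∫ d, g d ∂π) + ∫ d, Dq μ f e i (d i) ∂π := by
      rw [← integral_add hgint hDint]
      refine integral_congr_ae (Filter.Eventually.of_forall fun d => ?_)
      simp only [hg]
      ring
    have hupd : ∫ d, g d ∂π =
        ∫ x, ∫ d, g (Function.update d i x) ∂π ∂(μ i) :=
      integral_update_right μ i hgmeas 2 hgb
    -- bound the inner integral for each branch value x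
    have hinner : ∀ x : Ω i, ∫ d, g (Function.update d i x) ∂π ≤
        ∑ j ∈ Finset.univ.erase i,
          (π ((fun d => Function.update d i x) ⁻¹' (C j))).toReal *
          (((Measure.pi μ).prod (μ j))
            {q | f q.1 ≠ f (Function.update q.1 j q.2)}).toReal := by
      intro x
      -- the minorant for the branch
      set hx : (∀ j, Ω j) → ℝ := fun d => max (g (Function.update d i x)) (-1)
        with hhx
      have hxm : Measurable hx :=
        (hgmeas.comp measurable_update_left).max measurable_const
      have hxlb : ∀ d, -1 ≤ hx d := fun d => le_max_right _ _
      have hxub : ∀ d, hx d ≤ Vq μ f (c x) (Function.update e i (some x)) d := by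
        intro d
        apply max_le (hgub x d)
        have := abs_Vq_le μ f hf hf01 (c x) (Function.update e i (some x)) d
        linarith [neg_le_of_abs_le this]
      have hIH := IH x (Function.update e i (some x)) (hAv' x) hx hxm hxlb hxub
      -- compare the two integrals
      have hle1 : ∫ d, g (Function.update d i x) ∂π ≤ ∫ d, hx d ∂π := by
        apply integral_mono
        · exact integrable_bdd _
            ((hgmeas.comp measurable_update_left).aestronglyMeasurable) 2
            fun d => hgb _
        · exact integrable_bdd _ hxm.aestronglyMeasurable 2 fun d => by
            have h1 := hgb (Function.update d i x)
            have h2 : (-1:ℝ) ≤ 2 := by norm_num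
            rw [abs_le] at h1 ⊢
            constructor
            · exact le_max_of_le_left h1.1
            · exact max_le h1.2 h2
        · exact fun d => le_max_left _ _
      -- kill the i-term and pass to the measurable supersets
      have hizero : (π {d | i ∈ (c x).revealed d}) = 0 := by
        have : {d | i ∈ (c x).revealed d} = (∅ : Set (∀ j, Ω j)) := by
          ext d
          simp only [Set.mem_setOf_eq, Set.mem_empty_iff_false, iff_false]
          exact not_mem_revealed (hAv'' x) hiIns d
        rw [this]
        exact measure_empty
      have hsubC : ∀ j : I, {d | j ∈ (c x).revealed d} ⊆
          (fun d => Function.update d i x) ⁻¹' (C j) := by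
        intro j d hd
        simp only [Set.mem_setOf_eq] at hd
        apply hC1 j
        simp only [Set.mem_setOf_eq, DTree.revealed, Function.update_self]
        have hrev : (c x).revealed (Function.update d i x) = (c x).revealed d :=
          revealed_update_driver (hAv'' x) hiIns d x
        rw [hrev]
        exact Set.mem_insert_of_mem _ hd
      calc ∫ d, g (Function.update d i x) ∂π ≤ ∫ d, hx d ∂π := hle1
        _ ≤ ∑ j : I, (π {d | j ∈ (c x).revealed d}).toReal *
            (((Measure.pi μ).prod (μ j))
              {q | f q.1 ≠ f (Function.update q.1 j q.2)}).toReal := hIH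
        _ = (π {d | i ∈ (c x).revealed d}).toReal *
              (((Measure.pi μ).prod (μ i))
                {q | f q.1 ≠ f (Function.update q.1 i q.2)}).toReal +
            ∑ j ∈ Finset.univ.erase i,
              (π {d | j ∈ (c x).revealed d}).toReal *
              (((Measure.pi μ).prod (μ j))
                {q | f q.1 ≠ f (Function.update q.1 j q.2)}).toReal :=
            (Finset.add_sum_erase _ _ (Finset.mem_univ i)).symm
        _ = ∑ j ∈ Finset.univ.erase i,
              (π {d | j ∈ (c x).revealed d}).toReal *
              (((Measure.pi μ).prod (μ j))
                {q | f q.1 ≠ f (Function.update q.1 j q.2)}).toReal := by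
            rw [hizero]
            simp
        _ ≤ ∑ j ∈ Finset.univ.erase i,
              (π ((fun d => Function.update d i x) ⁻¹' (C j))).toReal *
              (((Measure.pi μ).prod (μ j))
                {q | f q.1 ≠ f (Function.update q.1 j q.2)}).toReal := by
            refine Finset.sum_le_sum fun j _ => ?_
            refine mul_le_mul_of_nonneg_right ?_ (hKnn j)
            exact ENNReal.toReal_mono (measure_ne_top _ _)
              (measure_mono (hsubC j))
    -- integrate the branch bound over x
    have houter : ∫ x, ∫ d, g (Function.update d i x) ∂π ∂(μ i) ≤
        ∑ j ∈ Finset.univ.erase i, (π (C j)).toReal *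
          (((Measure.pi μ).prod (μ j))
            {q | f q.1 ≠ f (Function.update q.1 j q.2)}).toReal := by
      have hinnermeas : Measurable fun x : Ω i =>
          ∫ d, g (Function.update d i x) ∂π :=
        (StronglyMeasurable.integral_prod_right'
          hjointmeas.stronglyMeasurable).measurable
      have hρmeas : Measurable fun x : Ω i =>
          ∑ j ∈ Finset.univ.erase i,
            (π ((fun d => Function.update d i x) ⁻¹' (C j))).toReal *
            (((Measure.pi μ).prod (μ j))
              {q | f q.1 ≠ f (Function.update q.1 j q.2)}).toReal := by
        refine Finset.measurable_sum _ fun j _ => ?_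
        exact ((measurable_slice_measure μ i (hC2 j)).ennreal_toReal).mul_const _
      have hρb : ∀ x : Ω i,
          |∑ j ∈ Finset.univ.erase i,
            (π ((fun d => Function.update d i x) ⁻¹' (C j))).toReal *
            (((Measure.pi μ).prod (μ j))
              {q | f q.1 ≠ f (Function.update q.1 j q.2)}).toReal| ≤
          ∑ j ∈ Finset.univ.erase i,
            (((Measure.pi μ).prod (μ j))
              {q | f q.1 ≠ f (Function.update q.1 j q.2)}).toReal := by
        intro x
        rw [abs_of_nonneg (Finset.sum_nonneg fun j _ =>
          mul_nonneg ENNReal.toReal_nonneg (hKnn j))]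
        refine Finset.sum_le_sum fun j _ => ?_
        have h1 : (π ((fun d => Function.update d i x) ⁻¹' (C j))).toReal ≤ 1 := by
          refine ENNReal.toReal_le_of_le_ofReal zero_le_one ?_
          simpa using prob_le_one
        calc (π ((fun d => Function.update d i x) ⁻¹' (C j))).toReal *
            (((Measure.pi μ).prod (μ j))
              {q | f q.1 ≠ f (Function.update q.1 j q.2)}).toReal ≤
            1 * (((Measure.pi μ).prod (μ j))
              {q | f q.1 ≠ f (Function.update q.1 j q.2)}).toReal :=
            mul_le_mul_of_nonneg_right h1 (hKnn j)
          _ = _ := one_mul _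
      calc ∫ x, ∫ d, g (Function.update d i x) ∂π ∂(μ i)
          ≤ ∫ x, ∑ j ∈ Finset.univ.erase i,
            (π ((fun d => Function.update d i x) ⁻¹' (C j))).toReal *
            (((Measure.pi μ).prod (μ j))
              {q | f q.1 ≠ f (Function.update q.1 j q.2)}).toReal ∂(μ i) := by
            apply integral_mono
            · exact integrable_bdd _ hinnermeas.aestronglyMeasurable 2
                fun x => abs_integral_le _ fun d => hgb _
            · exact integrable_bdd _ hρmeas.aestronglyMeasurable _ hρb
            · exact hinner
        _ = ∑ j ∈ Finset.univ.erase i,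
            (∫ x, (π ((fun d => Function.update d i x) ⁻¹' (C j))).toReal ∂(μ i)) *
            (((Measure.pi μ).prod (μ j))
              {q | f q.1 ≠ f (Function.update q.1 j q.2)}).toReal := by
            rw [integral_finset_sum]
            · refine Finset.sum_congr rfl fun j _ => ?_
              rw [integral_mul_const]
            · intro j _
              refine integrable_bdd _ (((measurable_slice_measure μ i
                (hC2 j)).ennreal_toReal).mul_const _).aestronglyMeasurable
                ((((Measure.pi μ).prod (μ j))
                  {q | f q.1 ≠ f (Function.update q.1 j q.2)}).toReal) fun x => ?_
              rw [abs_of_nonneg (mul_nonneg ENNReal.toReal_nonneg (hKnn j))]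
              have h1 : (π ((fun d => Function.update d i x) ⁻¹' (C j))).toReal
                  ≤ 1 := by
                refine ENNReal.toReal_le_of_le_ofReal zero_le_one ?_
                simpa using prob_le_one
              calc _ ≤ 1 * (((Measure.pi μ).prod (μ j))
                  {q | f q.1 ≠ f (Function.update q.1 j q.2)}).toReal :=
                  mul_le_mul_of_nonneg_right h1 (hKnn j)
                _ = _ := one_mul _
        _ = ∑ j ∈ Finset.univ.erase i, (π (C j)).toReal *
            (((Measure.pi μ).prod (μ j))
              {q | f q.1 ≠ f (Function.update q.1 j q.2)}).toReal := by
            refine Finset.sum_congr rfl fun j _ => ?_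
            rw [integral_toReal_slice μ i (hC2 j)]
    -- the D-term
    have hDle : ∫ d, Dq μ f e i (d i) ∂π ≤
        (((Measure.pi μ).prod (μ i))
          {q | f q.1 ≠ f (Function.update q.1 i q.2)}).toReal :=
      integral_Dq_le μ f hf hf01 e i hei
    -- assemble
    have hAuniv : {d : ∀ j, Ω j | i ∈ (DTree.node i c).revealed d} = Set.univ := by
      ext d
      simp [DTree.revealed]
    have hfinal : ∑ j : I, (π {d | j ∈ (DTree.node i c).revealed d}).toReal *
        (((Measure.pi μ).prod (μ j))
          {q | f q.1 ≠ f (Function.update q.1 j q.2)}).toReal =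
        (((Measure.pi μ).prod (μ i))
          {q | f q.1 ≠ f (Function.update q.1 i q.2)}).toReal +
        ∑ j ∈ Finset.univ.erase i,
          (π {d | j ∈ (DTree.node i c).revealed d}).toReal *
          (((Measure.pi μ).prod (μ j))
            {q | f q.1 ≠ f (Function.update q.1 j q.2)}).toReal := by
      rw [← Finset.add_sum_erase _ _ (Finset.mem_univ i)]
      congr 1
      rw [hAuniv]
      simp
    rw [hfinal, hsplit, hupd]
    have hCsum : ∑ j ∈ Finset.univ.erase i, (π (C j)).toReal *
        (((Measure.pi μ).prod (μ j))
          {q | f q.1 ≠ f (Function.update q.1 j q.2)}).toReal =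
        ∑ j ∈ Finset.univ.erase i,
          (π {d | j ∈ (DTree.node i c).revealed d}).toReal *
          (((Measure.pi μ).prod (μ j))
            {q | f q.1 ≠ f (Function.update q.1 j q.2)}).toReal := by
      refine Finset.sum_congr rfl fun j _ => ?_
      rw [hC3 j]
    rw [← hCsum]
    linarith [houter, hDle]

end OSSSAux


/-- The OSSS inequality: if a decision tree `T` computes `f : Π i, Ω i → [0,1]`,
then `Var(f) ≤ Σ_i δ_i(T)·Inf_i(f)`, where `δ_i(T)` is the revealment of the
coordinate `i` and `Inf_i(f)` the probability that independently resampling the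
coordinate `i` changes the value of `f`. -/
theorem osss {I : Type*} [Fintype I] [DecidableEq I] {Ω : I → Type*}
    [∀ i, MeasurableSpace (Ω i)] (μ : ∀ i, Measure (Ω i))
    [∀ i, IsProbabilityMeasure (μ i)]
    (f : (∀ i, Ω i) → ℝ) (hf : Measurable f)
    (hf01 : ∀ ω, f ω ∈ Set.Icc (0 : ℝ) 1)
    (T : DTree I Ω ℝ) (hT : ∀ ω, T.eval ω = f ω) :
    (∫ ω, (f ω - ∫ ω', f ω' ∂(Measure.pi μ)) ^ 2 ∂(Measure.pi μ)) ≤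
      ∑ i : I, ((Measure.pi μ) {ω | i ∈ T.revealed ω} *
        ((Measure.pi μ).prod (μ i))
          {q | f q.1 ≠ f (Function.update q.1 i q.2)}).toReal := by
  classical
  set e₀ : ∀ j, Option (Ω j) := fun _ => none with he₀
  set T' : DTree I Ω ℝ := OSSSAux.prune T e₀ with hT'
  have hcons : ∀ ω, OSSSAux.Econs e₀ ω := fun ω j v hj => by simp [he₀] at hj
  have heval' : ∀ ω, T'.eval ω = f ω := fun ω =>
    (OSSSAux.prune_eval (hcons ω)).trans (hT ω)
  have hAv : OSSSAux.Avoids T' {j | (e₀ j).isSome} := OSSSAux.prune_avoids T e₀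
  have hmem : OSSSAux.mq μ f ∈ Set.Icc (0:ℝ) 1 := OSSSAux.mq_mem μ f hf hf01
  have habs : ∀ ω, |f ω - OSSSAux.mq μ f| ≤ 1 := fun ω =>
    OSSSAux.abs_sub_le_one_of_Icc (hf01 ω) hmem
  -- integrability facts
  have hsqm : Measurable fun ω => (f ω - OSSSAux.mq μ f)^2 :=
    (hf.sub measurable_const).pow_const 2
  have hsqb : ∀ ω, |(f ω - OSSSAux.mq μ f)^2| ≤ 1 := by
    intro ω
    rw [abs_of_nonneg (sq_nonneg _)]
    nlinarith [habs ω, abs_nonneg (f ω - OSSSAux.mq μ f), sq_abs (f ω - OSSSAux.mq μ f)]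
  have hsqint : Integrable (fun ω => (f ω - OSSSAux.mq μ f)^2) (Measure.pi μ) :=
    OSSSAux.integrable_bdd _ hsqm.aestronglyMeasurable 1 hsqb
  have hlinint : Integrable (fun ω => f ω - OSSSAux.mq μ f) (Measure.pi μ) :=
    OSSSAux.integrable_bdd _ (hf.sub measurable_const).aestronglyMeasurable 1 habs
  have hlin0 : ∫ ω, (f ω - OSSSAux.mq μ f) ∂(Measure.pi μ) = 0 := by
    rw [integral_sub (OSSSAux.intf μ f hf hf01) (integrable_const _), integral_const]
    simp [OSSSAux.mq]
  -- the value of Vq at the top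
  have hVtop : ∀ d, OSSSAux.Vq μ f T' e₀ d =
      ∫ ω, (f ω - OSSSAux.mq μ f)^2 ∂(Measure.pi μ) := by
    intro d
    unfold OSSSAux.Vq
    have hptw : ∀ ω, (f (OSSSAux.ovr e₀ ω) - f (OSSSAux.hyb T' (OSSSAux.ovr e₀ ω) d))
        * (f ω - OSSSAux.mq μ f) =
        (f ω - OSSSAux.mq μ f)^2 +
          (OSSSAux.mq μ f - f d) * (f ω - OSSSAux.mq μ f) := by
      intro ω
      have h1 : OSSSAux.ovr e₀ ω = ω := rfl
      rw [h1]
      have h2 : f (OSSSAux.hyb T' ω d) = f d := by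
        rw [← heval' (OSSSAux.hyb T' ω d), OSSSAux.eval_hyb, heval']
      rw [h2]
      ring
    rw [integral_congr_ae (Filter.Eventually.of_forall hptw)]
    have hcm : Integrable (fun ω => (OSSSAux.mq μ f - f d) * (f ω - OSSSAux.mq μ f))
        (Measure.pi μ) := hlinint.const_mul _
    rw [integral_add hsqint hcm, integral_const_mul, hlin0]
    ring
  -- apply the main claim with the constant minorant
  set Var : ℝ := ∫ ω, (f ω - OSSSAux.mq μ f)^2 ∂(Measure.pi μ) with hVar
  have hVar0 : 0 ≤ Var := integral_nonneg fun ω => sq_nonneg _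
  have hmain := OSSSAux.main_claim μ f hf hf01 T' e₀ hAv (fun _ => Var)
    measurable_const (fun d => by linarith) (fun d => (hVtop d).ge)
  rw [integral_const] at hmain
  simp only [measure_univ, probReal_univ, ENNReal.toReal_one, smul_eq_mul, one_mul] at hmain
  -- compare the revealment sets of T' and T, and finish
  have hstep : ∀ j : I,
      ((Measure.pi μ) {d | j ∈ T'.revealed d}).toReal *
        (((Measure.pi μ).prod (μ j))
          {q | f q.1 ≠ f (Function.update q.1 j q.2)}).toReal ≤
      ((Measure.pi μ) {ω | j ∈ T.revealed ω} *
        ((Measure.pi μ).prod (μ j))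
          {q | f q.1 ≠ f (Function.update q.1 j q.2)}).toReal := by
    intro j
    rw [ENNReal.toReal_mul]
    refine mul_le_mul_of_nonneg_right ?_ ENNReal.toReal_nonneg
    refine ENNReal.toReal_mono (measure_ne_top _ _) (measure_mono ?_)
    intro d hd
    exact OSSSAux.prune_revealed (hcons d) hd
  have hgoal : (∫ ω, (f ω - ∫ ω', f ω' ∂(Measure.pi μ)) ^ 2 ∂(Measure.pi μ)) = Var := rfl
  rw [hgoal]
  exact hmain.trans (Finset.sum_le_sum fun j _ => hstep j)
end

section
/- Let (f_n)_{n≥1} be a sequence of increasing differentiable functions f_n : [0,b] → [0,1] with f_0 ≡ 1, converging pointwise to f, and suppose for some c > 0 that f_n' ≥ c·(n/Σ_n)·f_n where Σ_n = Σ_{k=0}^{n−1} f_k. Then there exists p_c ∈ [0,b] such that: (1) for every p < p_c there exists c_p > 0 with f_n(p) = O(exp(−c_p n)); and (2) for every p > p_c, f(p) ≥ c(p − p_c). -/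
open Filter

lemma expGrow {u v : ℝ → ℝ} {a b T : ℝ} (hab : a ≤ b)
    (hd : ∀ x ∈ Set.Icc a b, HasDerivWithinAt u (v x) (Set.Icc a b) x)
    (h : ∀ x ∈ Set.Icc a b, T * u x ≤ v x) :
    u a ≤ u b * Real.exp (-T * (b - a)) := by
  set g : ℝ → ℝ := fun x => u x * Real.exp (-T * x) with hg
  have hgd : ∀ x ∈ Set.Icc a b, HasDerivWithinAt g
      (v x * Real.exp (-T * x) + u x * (Real.exp (-T * x) * -T)) (Set.Icc a b) x := by
    intro x hx
    have he : HasDerivAt (fun y => Real.exp (-T * y)) (Real.exp (-T * x) * -T) x := by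
      have h1 : HasDerivAt (fun y : ℝ => -T * y) (-T) x := by
        simpa using (hasDerivAt_id x).const_mul (-T)
      simpa [Function.comp_def] using (Real.hasDerivAt_exp (-T * x)).comp x h1
    exact (hd x hx).mul he.hasDerivWithinAt
  have hmono : MonotoneOn g (Set.Icc a b) := by
    apply monotoneOn_of_hasDerivWithinAt_nonneg (convex_Icc a b)
      (fun x hx => (hgd x hx).continuousWithinAt)
      (fun x hx => ((hgd x (interior_subset hx)).mono interior_subset))
    intro x hx
    have hx' := interior_subset hx
    have h1 := h x hx'
    nlinarith [Real.exp_pos (-T * x), mul_nonneg (sub_nonneg.2 h1) (Real.exp_pos (-T * x)).le]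
  have h1 : g a ≤ g b := hmono (Set.left_mem_Icc.2 hab) (Set.right_mem_Icc.2 hab) hab
  have h2 := mul_le_mul_of_nonneg_right h1 (Real.exp_pos (T * a)).le
  have e1 : g a * Real.exp (T * a) = u a := by
    simp only [hg, mul_assoc, ← Real.exp_add]
    norm_num
  have e2 : g b * Real.exp (T * a) = u b * Real.exp (-T * (b - a)) := by
    simp only [hg, mul_assoc, ← Real.exp_add]
    ring_nf
  rw [e1, e2] at h2
  exact h2

lemma linGrow {u v : ℝ → ℝ} {a b L : ℝ} (hab : a ≤ b)
    (hd : ∀ x ∈ Set.Icc a b, HasDerivWithinAt u (v x) (Set.Icc a b) x)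
    (h : ∀ x ∈ Set.Icc a b, L ≤ v x) : u a + L * (b - a) ≤ u b := by
  set g : ℝ → ℝ := fun x => u x - L * x with hg
  have hgd : ∀ x ∈ Set.Icc a b, HasDerivWithinAt g (v x - L) (Set.Icc a b) x := by
    intro x hx
    have hL : HasDerivAt (fun y : ℝ => L * y) L x := by
      simpa using (hasDerivAt_id x).const_mul L
    exact (hd x hx).sub hL.hasDerivWithinAt
  have hmono : MonotoneOn g (Set.Icc a b) := by
    apply monotoneOn_of_hasDerivWithinAt_nonneg (convex_Icc a b)
      (fun x hx => (hgd x hx).continuousWithinAt)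
      (fun x hx => ((hgd x (interior_subset hx)).mono interior_subset))
    intro x hx
    have := h x (interior_subset hx)
    linarith
  have h1 : g a ≤ g b := hmono (Set.left_mem_Icc.2 hab) (Set.right_mem_Icc.2 hab) hab
  simp only [hg] at h1
  linarith

lemma sum_inv_le_log {m : ℕ} : ∑ i ∈ Finset.range m, (1:ℝ)/(i+1) ≤ 1 + Real.log m := by
  have h1 := harmonic_le_one_add_log m
  have h2 : ((harmonic m : ℚ) : ℝ) = ∑ i ∈ Finset.range m, (1:ℝ)/(i+1) := by
    unfold harmonic
    push_cast
    simp [one_div]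
  linarith [h2 ▸ h1]

lemma summable_exp_neg_rpow {c ε : ℝ} (hc : 0 < c) (hε : 0 < ε) :
    Summable (fun k : ℕ => Real.exp (-c * (k:ℝ) ^ ε)) := by
  have hsum : Summable (fun k : ℕ => 1 / ((k:ℝ)^2)) := by
    exact_mod_cast Real.summable_one_div_nat_pow.2 (by norm_num)
  apply summable_of_isBigO_nat hsum
  rw [Asymptotics.isBigO_iff]
  refine ⟨1, ?_⟩
  have htend : Tendsto (fun k : ℕ => ((k:ℝ)) ^ (ε/2)) atTop atTop :=
    (tendsto_rpow_atTop (by linarith)).comp tendsto_natCast_atTop_atTop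
  have hev : ∀ᶠ k : ℕ in atTop, (4/(ε*c)) ≤ ((k:ℝ)) ^ (ε/2) :=
    htend.eventually_ge_atTop _
  filter_upwards [hev, eventually_ge_atTop 1] with k hk hk1
  have hkpos : (0:ℝ) < k := by exact_mod_cast hk1
  have hlog : Real.log k ≤ (k:ℝ) ^ (ε/2) / (ε/2) := Real.log_le_rpow_div hkpos.le (by linarith)
  have hsplit : ((k:ℝ)) ^ ε = ((k:ℝ)) ^ (ε/2) * ((k:ℝ)) ^ (ε/2) := by
    rw [← Real.rpow_add hkpos]; ring_nf
  have hhalf : (0:ℝ) < ((k:ℝ)) ^ (ε/2) := Real.rpow_pos_of_pos hkpos _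
  have key : 2 * Real.log k ≤ c * (k:ℝ) ^ ε := by
    have e0 : (4/ε) * ((k:ℝ))^(ε/2) = 2 * (((k:ℝ))^(ε/2) / (ε/2)) := by
      field_simp; ring
    have h2 : 2 * Real.log k ≤ (4/ε) * ((k:ℝ)) ^ (ε/2) := by
      rw [e0]; linarith
    calc 2 * Real.log k ≤ (4/ε) * ((k:ℝ)) ^ (ε/2) := h2
      _ ≤ c * ((k:ℝ)) ^ (ε/2) * ((k:ℝ)) ^ (ε/2) := by
          have h4 : 4/ε ≤ c * ((k:ℝ)) ^ (ε/2) := by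
            have e2 : c * (4/(ε*c)) = 4/ε := by field_simp
            have := mul_le_mul_of_nonneg_left hk hc.le
            linarith [e2 ▸ this]
          nlinarith
      _ = c * (k:ℝ) ^ ε := by rw [hsplit]; ring
  have hle : Real.exp (-c * (k:ℝ) ^ ε) ≤ 1/((k:ℝ)^2) := by
    have e1 : Real.exp (-c * (k:ℝ)^ε) ≤ Real.exp (-(2 * Real.log k)) :=
      Real.exp_le_exp.2 (by linarith)
    have e2 : Real.exp (-(2 * Real.log k)) = 1/((k:ℝ)^2) := by
      rw [show -(2*Real.log k) = Real.log (1/((k:ℝ)^2)) by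
        rw [one_div, Real.log_inv, Real.log_pow]; push_cast; ring]
      exact Real.exp_log (by positivity)
    linarith [e2 ▸ e1]
  simp only [Real.norm_eq_abs, one_mul]
  rw [abs_of_pos (Real.exp_pos _), abs_of_pos (by positivity : (0:ℝ) < 1/((k:ℝ)^2))]
  exact hle

set_option maxHeartbeats 1000000 in
/-- If a family of increasing differentiable functions `f_n : [0,b] → [0,1]`
with `f_0 ≡ 1` converges pointwise to `f` and satisfies the differential
inequality `f_n' ≥ c (n/Σ_n) f_n` with `Σ_n = Σ_{k<n} f_k`, then there is a
critical point `p_c ∈ [0,b]` with exponential decay of `f_n` below `p_c` and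
at least linear growth of `f` above `p_c`. -/
theorem sharp_threshold_from_diff_ineq (b c : ℝ) (hb : 0 < b) (hc : 0 < c)
    (f : ℕ → ℝ → ℝ) (f' : ℕ → ℝ → ℝ) (F : ℝ → ℝ)
    (hmono : ∀ n, MonotoneOn (f n) (Set.Icc 0 b))
    (hderiv : ∀ n, ∀ p ∈ Set.Icc 0 b, HasDerivWithinAt (f n) (f' n p) (Set.Icc 0 b) p)
    (h01 : ∀ n, ∀ p ∈ Set.Icc 0 b, f n p ∈ Set.Icc (0 : ℝ) 1)
    (hf0 : ∀ p ∈ Set.Icc 0 b, f 0 p = 1)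
    (hlim : ∀ p ∈ Set.Icc 0 b, Tendsto (fun n => f n p) atTop (nhds (F p)))
    (hineq : ∀ n : ℕ, 1 ≤ n → ∀ p ∈ Set.Icc 0 b,
      c * ((n : ℝ) / ∑ k ∈ Finset.range n, f k p) * f n p ≤ f' n p) :
    ∃ pc ∈ Set.Icc 0 b,
      (∀ p ∈ Set.Icc 0 b, p < pc →
        ∃ cp > 0, ∃ C > 0, ∀ n : ℕ, f n p ≤ C * Real.exp (-cp * n)) ∧
      (∀ p ∈ Set.Icc 0 b, pc < p → c * (p - pc) ≤ F p) := by
  classical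
  set S : ℕ → ℝ → ℝ := fun n x => ∑ k ∈ Finset.range n, f k x with hSdef
  have hSeq : ∀ (n : ℕ) (x : ℝ), S n x = ∑ k ∈ Finset.range n, f k x := fun n x => by rw [hSdef]
  have hf0' : ∀ p ∈ Set.Icc (0:ℝ) b, ∀ n, 0 ≤ f n p := fun p hp n => (h01 n p hp).1
  have hf1' : ∀ p ∈ Set.Icc (0:ℝ) b, ∀ n, f n p ≤ 1 := fun p hp n => (h01 n p hp).2
  have hSmono_n : ∀ p ∈ Set.Icc (0:ℝ) b, ∀ m n : ℕ, m ≤ n → S m p ≤ S n p := by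
    intro p hp m n hmn
    exact Finset.sum_le_sum_of_subset_of_nonneg (Finset.range_subset_range.2 hmn)
      (fun k _ _ => hf0' p hp k)
  have hS1 : ∀ p ∈ Set.Icc (0:ℝ) b, ∀ n : ℕ, 1 ≤ n → 1 ≤ S n p := by
    intro p hp n hn
    have h1 : S 1 p = 1 := by simp [hSeq, hf0 p hp]
    have := hSmono_n p hp 1 n hn
    linarith
  have hSpos : ∀ p ∈ Set.Icc (0:ℝ) b, ∀ n : ℕ, 1 ≤ n → 0 < S n p :=
    fun p hp n hn => lt_of_lt_of_le one_pos (hS1 p hp n hn)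
  have hSmono_p : ∀ n, MonotoneOn (S n) (Set.Icc (0:ℝ) b) := by
    intro n x hx y hy hxy
    exact Finset.sum_le_sum fun k _ => hmono k hx hy hxy
  set A : Set ℝ := {x | x ∈ Set.Icc (0:ℝ) b ∧
      ∀ ε > (0:ℝ), ∃ᶠ n : ℕ in atTop, (n:ℝ) ^ ((1:ℝ) - ε) ≤ S n x} ∪ {b} with hAdef
  have hbA : b ∈ A := Or.inr rfl
  have hAne : A.Nonempty := ⟨b, hbA⟩
  have hAbdd : BddBelow A := by
    refine ⟨0, ?_⟩
    rintro x (⟨hx, -⟩ | rfl)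
    · exact hx.1
    · exact hb.le
  set pc := sInf A with hpcdef
  have hpcb : pc ≤ b := csInf_le hAbdd hbA
  have hpc0 : 0 ≤ pc := by
    apply le_csInf hAne
    rintro x (⟨hx, -⟩ | rfl)
    · exact hx.1
    · exact hb.le
  refine ⟨pc, ⟨hpc0, hpcb⟩, ?_, ?_⟩
  · -- exponential decay below pc
    intro p hp hppc
    set q' : ℝ := p + (pc - p)/4 with hq'def
    set q : ℝ := p + (pc - p)/2 with hqdef
    have hpq' : p < q' := by rw [hq'def]; linarith
    have hq'q : q' < q := by rw [hq'def, hqdef]; linarith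
    have hqpc : q < pc := by rw [hqdef]; linarith
    have hq'mem : q' ∈ Set.Icc (0:ℝ) b := ⟨by linarith [hp.1], by linarith⟩
    have hqmem : q ∈ Set.Icc (0:ℝ) b := ⟨by linarith [hp.1], by linarith⟩
    have hqnotP : ¬ (∀ ε > (0:ℝ), ∃ᶠ n : ℕ in atTop, (n:ℝ) ^ ((1:ℝ) - ε) ≤ S n q) := by
      intro hPq
      have : pc ≤ q := csInf_le hAbdd (Or.inl ⟨hqmem, hPq⟩)
      linarith
    push_neg at hqnotP
    obtain ⟨ε, hε, hfr⟩ := hqnotP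
    rw [Filter.eventually_atTop] at hfr
    obtain ⟨N, hN⟩ := hfr
    have hNq : ∀ n : ℕ, N ≤ n → S n q < (n:ℝ) ^ ((1:ℝ) - ε) :=
      fun n hn => hN n hn
    have hc' : (0:ℝ) < c * (q - q') := by
      apply mul_pos hc; linarith
    have stageA : ∀ k : ℕ, max N 1 ≤ k → f k q' ≤ Real.exp (-(c * (q - q')) * (k:ℝ) ^ ε) := by
      intro k hk
      have hk1 : 1 ≤ k := le_trans (le_max_right _ _) hk
      have hkN : N ≤ k := le_trans (le_max_left _ _) hk
      have hkpos : (0:ℝ) < k := by exact_mod_cast hk1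
      have hsub : Set.Icc q' q ⊆ Set.Icc (0:ℝ) b := Set.Icc_subset_Icc hq'mem.1 hqmem.2
      have hbound : ∀ x ∈ Set.Icc q' q, (c * (k:ℝ) ^ ε) * f k x ≤ f' k x := by
        intro x hx
        have hxmem := hsub hx
        have h1 := hineq k hk1 x hxmem
        rw [← hSeq] at h1
        have hSx : S k x ≤ S k q := hSmono_p k hxmem hqmem hx.2
        have hSxpos : 0 < S k x := hSpos x hxmem k hk1
        have hmul : (k:ℝ) ^ ε * (k:ℝ) ^ ((1:ℝ) - ε) = (k:ℝ) := by
          rw [← Real.rpow_add hkpos]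
          norm_num
        have h2 : (k:ℝ) ^ ε ≤ (k:ℝ) / S k x := by
          rw [le_div_iff₀ hSxpos]
          calc (k:ℝ)^ε * S k x ≤ (k:ℝ)^ε * S k q :=
                mul_le_mul_of_nonneg_left hSx (Real.rpow_nonneg hkpos.le ε)
            _ ≤ (k:ℝ)^ε * (k:ℝ)^((1:ℝ)-ε) :=
                mul_le_mul_of_nonneg_left (hNq k hkN).le (Real.rpow_nonneg hkpos.le ε)
            _ = (k:ℝ) := hmul
        calc (c * (k:ℝ)^ε) * f k x ≤ (c * ((k:ℝ)/S k x)) * f k x :=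
              mul_le_mul_of_nonneg_right (mul_le_mul_of_nonneg_left h2 hc.le) (hf0' x hxmem k)
          _ ≤ f' k x := h1
      have hgrow := expGrow hq'q.le
        (fun x hx => (hderiv k x (hsub hx)).mono hsub) hbound
      have hup : f k q * Real.exp (-(c * (k:ℝ)^ε) * (q - q')) ≤
          Real.exp (-(c * (k:ℝ)^ε) * (q - q')) := by
        nlinarith [Real.exp_pos (-(c * (k:ℝ)^ε) * (q - q')), hf1' q hqmem k, hf0' q hqmem k]
      have heq : -(c * (k:ℝ)^ε) * (q - q') = -(c * (q - q')) * (k:ℝ)^ε := by ring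
      calc f k q' ≤ f k q * Real.exp (-(c * (k:ℝ)^ε) * (q - q')) := hgrow
        _ ≤ Real.exp (-(c * (k:ℝ)^ε) * (q - q')) := hup
        _ = Real.exp (-(c * (q - q')) * (k:ℝ)^ε) := by rw [heq]
    have hsum := summable_exp_neg_rpow hc' hε
    set M : ℝ := ((max N 1 : ℕ) : ℝ) + ∑' k : ℕ, Real.exp (-(c * (q - q')) * (k:ℝ) ^ ε)
      with hMdef
    have htsum0 : 0 ≤ ∑' k : ℕ, Real.exp (-(c * (q - q')) * (k:ℝ) ^ ε) :=
      tsum_nonneg fun k => (Real.exp_pos _).le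
    have hone : (1:ℝ) ≤ ((max N 1 : ℕ):ℝ) := by exact_mod_cast le_max_right N 1
    have hMpos : 0 < M := by rw [hMdef]; linarith
    have hSM : ∀ n : ℕ, S n q' ≤ M := by
      intro n
      have hb1 : S n q' ≤ ∑ k ∈ Finset.range n,
          ((if k < max N 1 then (1:ℝ) else 0) + Real.exp (-(c * (q - q')) * (k:ℝ) ^ ε)) := by
        apply Finset.sum_le_sum
        intro k _
        by_cases hk : k < max N 1
        · simp only [hk, if_true]
          have h1 := hf1' q' hq'mem k
          have h2 := (Real.exp_pos (-(c * (q - q')) * (k:ℝ) ^ ε)).le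
          linarith
        · simp only [hk, if_false]
          push_neg at hk
          have := stageA k hk
          linarith
      rw [Finset.sum_add_distrib] at hb1
      have hb3 : ∑ k ∈ Finset.range n, (if k < max N 1 then (1:ℝ) else 0)
          ≤ ((max N 1 : ℕ):ℝ) := by
        rw [Finset.sum_boole]
        have hsubset : (Finset.range n).filter (fun k => k < max N 1) ⊆ Finset.range (max N 1) := by
          intro k hk
          simp only [Finset.mem_filter, Finset.mem_range] at hk ⊢
          exact hk.2
        have := Finset.card_le_card hsubset
        simp only [Finset.card_range] at this
        exact_mod_cast this
      have hb4 := Summable.sum_le_tsum (Finset.range n) (fun k _ => (Real.exp_pos _).le) hsum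
      rw [hMdef]
      linarith
    refine ⟨c * (q' - p) / M, div_pos (mul_pos hc (by linarith)) hMpos, 1, one_pos, ?_⟩
    intro n
    rcases Nat.eq_zero_or_pos n with rfl | hn
    · simp [hf0 p hp]
    · have hn1 : 1 ≤ n := hn
      have hsub : Set.Icc p q' ⊆ Set.Icc (0:ℝ) b := Set.Icc_subset_Icc hp.1 hq'mem.2
      have hbound : ∀ x ∈ Set.Icc p q', (c * ((n:ℝ) / M)) * f n x ≤ f' n x := by
        intro x hx
        have hxmem := hsub hx
        have h1 := hineq n hn1 x hxmem
        rw [← hSeq] at h1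
        have hSx : S n x ≤ M := le_trans (hSmono_p n hxmem hq'mem hx.2) (hSM n)
        have hSxpos : 0 < S n x := hSpos x hxmem n hn1
        have h2 : (n:ℝ)/M ≤ (n:ℝ)/S n x :=
          div_le_div_of_nonneg_left (Nat.cast_nonneg n) hSxpos hSx
        calc (c * ((n:ℝ)/M)) * f n x ≤ (c * ((n:ℝ)/S n x)) * f n x :=
              mul_le_mul_of_nonneg_right (mul_le_mul_of_nonneg_left h2 hc.le) (hf0' x hxmem n)
          _ ≤ f' n x := h1
      have hgrow := expGrow hpq'.le (fun x hx => (hderiv n x (hsub hx)).mono hsub) hbound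
      have hfq' : f n q' ≤ 1 := hf1' q' hq'mem n
      have heq : -(c * ((n:ℝ)/M)) * (q' - p) = -(c * (q' - p) / M) * (n:ℝ) := by ring
      calc f n p ≤ f n q' * Real.exp (-(c * ((n:ℝ)/M)) * (q' - p)) := hgrow
        _ ≤ 1 * Real.exp (-(c * ((n:ℝ)/M)) * (q' - p)) :=
            mul_le_mul_of_nonneg_right hfq' (Real.exp_pos _).le
        _ = 1 * Real.exp (-(c * (q' - p) / M) * (n:ℝ)) := by rw [heq]
  · -- linear growth above pc
    intro p hp hpcp
    have hFp0 : 0 ≤ F p := ge_of_tendsto (hlim p hp) (Eventually.of_forall fun n => hf0' p hp n)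
    have hPq : ∀ q, pc < q → q < p → ∀ ε > (0:ℝ),
        ∃ᶠ n : ℕ in atTop, (n:ℝ) ^ ((1:ℝ) - ε) ≤ S n q := by
      intro q hq1 hq2 ε hε
      have hqmem : q ∈ Set.Icc (0:ℝ) b := ⟨by linarith, by linarith [hp.2]⟩
      obtain ⟨x, hxA, hxq⟩ := exists_lt_of_csInf_lt hAne (show sInf A < q from hq1)
      rcases hxA with ⟨hxmem, hxP⟩ | rfl
      · refine (hxP ε hε).mono ?_
        intro n hn
        exact le_trans hn (hSmono_p n hxmem hqmem hxq.le)
      · exfalso; linarith [hp.2]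
    have key2 : ∀ q, pc < q → q < p → ∀ δ' : ℝ, 0 < δ' → δ' < 1 → ∀ δ : ℝ, 0 < δ →
        c * (1 - δ') * (p - q) ≤ F p + δ := by
      intro q hq1 hq2 δ' hδ'0 hδ'1 δ hδ
      have hqmem : q ∈ Set.Icc (0:ℝ) b := ⟨by linarith, by linarith [hp.2]⟩
      have hqp : q ≤ p := hq2.le
      have hsub : Set.Icc q p ⊆ Set.Icc (0:ℝ) b := Set.Icc_subset_Icc hqmem.1 hp.2
      obtain ⟨N₁, hN₁⟩ : ∃ N₁ : ℕ, ∀ i, N₁ ≤ i → f i p ≤ F p + δ := by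
        have h := Filter.Tendsto.eventually_lt_const (by linarith : F p < F p + δ) (hlim p hp)
        rw [Filter.eventually_atTop] at h
        obtain ⟨N₁, hN₁⟩ := h
        exact ⟨N₁, fun i hi => (hN₁ i hi).le⟩
      have claim : ∀ m : ℕ, 1 ≤ m →
          c * Real.log (S (m+1) q) * (p - q) ≤ (N₁:ℝ) + (F p + δ) * (1 + Real.log m) := by
        intro m hm
        set Tn : ℝ → ℝ := fun x => ∑ j ∈ Finset.range m, f (j+1) x / ((j:ℝ)+1) with hTdef
        set Tn' : ℝ → ℝ := fun x => ∑ j ∈ Finset.range m, f' (j+1) x / ((j:ℝ)+1) with hT'def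
        have hTd : ∀ x ∈ Set.Icc q p, HasDerivWithinAt Tn (Tn' x) (Set.Icc q p) x := by
          intro x hx
          apply HasDerivWithinAt.fun_sum
          intro j _
          exact ((hderiv (j+1) x (hsub hx)).mono hsub).div_const _
        have hlow : ∀ x ∈ Set.Icc q p, c * Real.log (S (m+1) q) ≤ Tn' x := by
          intro x hx
          have hxmem := hsub hx
          have hterm : ∀ j ∈ Finset.range m,
              c * (Real.log (S (j+1+1) x) - Real.log (S (j+1) x)) ≤ f' (j+1) x / ((j:ℝ)+1) := by
            intro j _
            have hj1 : 1 ≤ j + 1 := Nat.le_add_left 1 j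
            have hSj : 0 < S (j+1) x := hSpos x hxmem (j+1) hj1
            have hSj2 : 0 < S (j+1+1) x := hSpos x hxmem (j+1+1) (by omega)
            have hstep : S (j+1+1) x = S (j+1) x + f (j+1) x := by
              rw [hSeq, hSeq, Finset.sum_range_succ]
            have hlog : Real.log (S (j+1+1) x) - Real.log (S (j+1) x)
                ≤ f (j+1) x / S (j+1) x := by
              rw [← Real.log_div hSj2.ne' hSj.ne']
              have h1 := Real.log_le_sub_one_of_pos (div_pos hSj2 hSj)
              have h2 : S (j+1+1) x / S (j+1) x - 1 = f (j+1) x / S (j+1) x := by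
                rw [hstep]; field_simp; ring
              linarith [h2 ▸ h1]
            have hineq' := hineq (j+1) hj1 x hxmem
            rw [← hSeq] at hineq'
            have hjpos : (0:ℝ) < (j:ℝ)+1 := by positivity
            have h3 : c * f (j+1) x / S (j+1) x ≤ f' (j+1) x / ((j:ℝ)+1) := by
              rw [div_le_div_iff₀ hSj hjpos]
              have h4 := mul_le_mul_of_nonneg_right hineq' hSj.le
              have h5 : c * (((j+1:ℕ):ℝ)/S (j+1) x) * f (j+1) x * S (j+1) x
                  = c * ((j:ℝ)+1) * f (j+1) x := by
                push_cast
                field_simp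
              rw [h5] at h4
              nlinarith [h4]
            calc c * (Real.log (S (j+1+1) x) - Real.log (S (j+1) x))
                ≤ c * (f (j+1) x / S (j+1) x) := mul_le_mul_of_nonneg_left hlog hc.le
              _ = c * f (j+1) x / S (j+1) x := by ring
              _ ≤ f' (j+1) x / ((j:ℝ)+1) := h3
          have hsum := Finset.sum_le_sum hterm
          have htel : ∑ j ∈ Finset.range m,
              (Real.log (S (j+1+1) x) - Real.log (S (j+1) x))
              = Real.log (S (m+1) x) - Real.log (S 1 x) :=
            Finset.sum_range_sub (fun j => Real.log (S (j+1) x)) m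
          have hS1x : S 1 x = 1 := by simp [hSeq, hf0 x hxmem]
          have hLHS : ∑ j ∈ Finset.range m,
              c * (Real.log (S (j+1+1) x) - Real.log (S (j+1) x))
              = c * Real.log (S (m+1) x) := by
            rw [← Finset.mul_sum, htel, hS1x, Real.log_one, sub_zero]
          have hmonoS : Real.log (S (m+1) q) ≤ Real.log (S (m+1) x) :=
            Real.log_le_log (hSpos q hqmem (m+1) (by omega))
              (hSmono_p (m+1) hqmem hxmem hx.1)
          calc c * Real.log (S (m+1) q) ≤ c * Real.log (S (m+1) x) :=
                mul_le_mul_of_nonneg_left hmonoS hc.le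
            _ = ∑ j ∈ Finset.range m,
                c * (Real.log (S (j+1+1) x) - Real.log (S (j+1) x)) := hLHS.symm
            _ ≤ Tn' x := hsum
        have hgrow := linGrow hqp hTd hlow
        have hTq0 : 0 ≤ Tn q :=
          Finset.sum_nonneg fun j _ => div_nonneg (hf0' q hqmem (j+1)) (by positivity)
        have hFδ : (0:ℝ) ≤ F p + δ := by linarith
        have hTup : Tn p ≤ (N₁:ℝ) + (F p + δ) * (1 + Real.log m) := by
          have hb1 : Tn p ≤ ∑ j ∈ Finset.range m,
              ((if j+1 < N₁ then (1:ℝ) else 0) + (F p + δ)/((j:ℝ)+1)) := by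
            apply Finset.sum_le_sum
            intro j _
            have hjpos : (0:ℝ) < (j:ℝ)+1 := by positivity
            by_cases hj : j+1 < N₁
            · simp only [hj, if_true]
              have h1 : f (j+1) p / ((j:ℝ)+1) ≤ 1 := by
                rw [div_le_one hjpos]
                have := hf1' p hp (j+1)
                linarith
              have h2 : 0 ≤ (F p + δ)/((j:ℝ)+1) := by positivity
              linarith
            · simp only [hj, if_false]
              push_neg at hj
              rw [zero_add]
              gcongr
              exact hN₁ (j+1) hj
          rw [Finset.sum_add_distrib] at hb1
          have hb3 : ∑ j ∈ Finset.range m, (if j+1 < N₁ then (1:ℝ) else 0) ≤ (N₁:ℝ) := by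
            rw [Finset.sum_boole]
            have hsubset : (Finset.range m).filter (fun j => j+1 < N₁) ⊆ Finset.range N₁ := by
              intro j hj
              simp only [Finset.mem_filter, Finset.mem_range] at hj ⊢
              omega
            have hcard := Finset.card_le_card hsubset
            simp only [Finset.card_range] at hcard
            exact_mod_cast hcard
          have hb4 : ∑ j ∈ Finset.range m, (F p + δ)/((j:ℝ)+1)
              ≤ (F p + δ) * (1 + Real.log m) := by
            have he : ∑ j ∈ Finset.range m, (F p + δ)/((j:ℝ)+1)
                = (F p + δ) * ∑ j ∈ Finset.range m, (1:ℝ)/((j:ℝ)+1) := by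
              rw [Finset.mul_sum]
              apply Finset.sum_congr rfl
              intro j _
              ring
            rw [he]
            exact mul_le_mul_of_nonneg_left sum_inv_le_log hFδ
          linarith
        linarith [hgrow, hTq0, hTup]
      by_contra hcon
      push_neg at hcon
      obtain ⟨n₀, hn₀⟩ := exists_nat_gt
        (Real.exp (((N₁:ℝ) + (F p + δ))/(c * (1 - δ') * (p - q) - (F p + δ))))
      obtain ⟨n, hfr2, hge⟩ := ((hPq q hq1 hq2 δ' hδ'0).and_eventually
        (Filter.eventually_ge_atTop (max n₀ 2))).exists
      have hn2 : 2 ≤ n := le_trans (le_max_right _ _) hge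
      have hnn₀ : n₀ ≤ n := le_trans (le_max_left _ _) hge
      have hnpos : (0:ℝ) < (n:ℝ) := by exact_mod_cast (show 0 < n by omega)
      have hm1 : 1 ≤ n - 1 := by omega
      have hmn : (n - 1) + 1 = n := by omega
      have hclaim := claim (n-1) hm1
      rw [hmn] at hclaim
      have hFδ : (0:ℝ) ≤ F p + δ := by linarith
      have hlogS : (1 - δ') * Real.log (n:ℝ) ≤ Real.log (S n q) := by
        have h1 : Real.log ((n:ℝ) ^ ((1:ℝ) - δ')) ≤ Real.log (S n q) :=
          Real.log_le_log (Real.rpow_pos_of_pos hnpos _) hfr2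
        rwa [Real.log_rpow hnpos] at h1
      have hm0 : (0:ℝ) < ((n-1:ℕ):ℝ) := by exact_mod_cast (show 0 < n - 1 by omega)
      have hlogm : Real.log ((n-1:ℕ):ℝ) ≤ Real.log (n:ℝ) :=
        Real.log_le_log hm0 (by exact_mod_cast (show n - 1 ≤ n by omega))
      have hchain : (c * (1 - δ') * (p - q)) * Real.log (n:ℝ)
          ≤ (N₁:ℝ) + (F p + δ) + (F p + δ) * Real.log (n:ℝ) := by
        have h2 : c * ((1-δ') * Real.log (n:ℝ)) * (p-q) ≤ c * Real.log (S n q) * (p - q) :=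
          mul_le_mul_of_nonneg_right (mul_le_mul_of_nonneg_left hlogS hc.le) (by linarith)
        have h3' := mul_le_mul_of_nonneg_left hlogm hFδ
        calc (c * (1 - δ') * (p - q)) * Real.log (n:ℝ)
            = c * ((1-δ') * Real.log (n:ℝ)) * (p - q) := by ring
          _ ≤ c * Real.log (S n q) * (p - q) := h2
          _ ≤ (N₁:ℝ) + (F p + δ) * (1 + Real.log ((n-1:ℕ):ℝ)) := hclaim
          _ ≤ (N₁:ℝ) + (F p + δ) + (F p + δ) * Real.log (n:ℝ) := by nlinarith [h3']
      have hAC : 0 < c * (1 - δ') * (p - q) - (F p + δ) := by linarith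
      have hlogn : ((N₁:ℝ) + (F p + δ))/(c * (1 - δ') * (p - q) - (F p + δ))
          < Real.log (n:ℝ) := by
        have hexp : Real.exp (((N₁:ℝ) + (F p + δ))/(c * (1 - δ') * (p - q) - (F p + δ)))
            < (n:ℝ) := lt_of_lt_of_le hn₀ (by exact_mod_cast hnn₀)
        exact (Real.lt_log_iff_exp_lt hnpos).2 hexp
      have hfin := mul_lt_mul_of_pos_left hlogn hAC
      have he2 : (c * (1 - δ') * (p - q) - (F p + δ)) *
          (((N₁:ℝ) + (F p + δ))/(c * (1 - δ') * (p - q) - (F p + δ)))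
          = (N₁:ℝ) + (F p + δ) := by
        field_simp
      rw [he2] at hfin
      nlinarith [hchain, hfin]
    have key3 : ∀ q, pc < q → q < p → c * (p - q) ≤ F p := by
      intro q hq1 hq2
      have hstep : ∀ δ' : ℝ, 0 < δ' → δ' < 1 → c * (1-δ') * (p-q) ≤ F p := by
        intro δ' h1 h2
        apply le_of_forall_pos_le_add
        intro δ hδ
        exact key2 q hq1 hq2 δ' h1 h2 δ hδ
      by_contra hcon
      push_neg at hcon
      have hpq : 0 < p - q := by linarith
      have hcpq : 0 < c * (p - q) := by positivity
      have hd0 : 0 < c*(p-q) - F p := by linarith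
      set δ' : ℝ := (c*(p-q) - F p)/(2*(c*(p-q))) with hδ'def
      have h1 : 0 < δ' := by positivity
      have h2 : δ' < 1 := by
        rw [hδ'def, div_lt_one (by positivity)]
        linarith [hFp0]
      have h3 := hstep δ' h1 h2
      have he : c * (1 - δ') * (p - q) = c*(p-q) - (c*(p-q) - F p)/2 := by
        rw [hδ'def]
        field_simp
      rw [he] at h3
      linarith
    by_contra hcon
    push_neg at hcon
    have hd : 0 < c * (p - pc) - F p := by linarith
    have hppc : 0 < p - pc := by linarith
    set q : ℝ := pc + (c*(p-pc) - F p)/(2*c) with hqdef2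
    have hq1 : pc < q := by
      rw [hqdef2]
      have : 0 < (c*(p-pc) - F p)/(2*c) := by positivity
      linarith
    have hq2 : q < p := by
      rw [hqdef2]
      have h2 : (c*(p-pc) - F p)/(2*c) ≤ (p-pc)/2 := by
        rw [div_le_div_iff₀ (by positivity) (by norm_num)]
        nlinarith [hFp0]
      linarith
    have hk := key3 q hq1 hq2
    rw [hqdef2] at hk
    have he : c * (p - (pc + (c*(p-pc) - F p)/(2*c))) = c*(p-pc) - (c*(p-pc) - F p)/2 := by
      field_simp
      ring
    rw [he] at hk
    linarith
end
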